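/- arXiv:2112.14886 — 6 statements merged into one kernel-verified Lean document; each statement's English description precedes it below -/
import Mathlib

section
/- Let α > 0 be a real number, let λ ∈ (0,1), and let n be a positive integer. Let (X_j)_{1≤j≤n} be independent Bernoulli random variables with P{X_j = 1} = 1/j, and set Y_n = X_1 + ⋯ + X_n. Let (X_{j,λ}(α))_{1≤j≤n} be independent Bernoulli random variables with P{X_{j,λ}(α) = 1} = α/(α + λj), and set Z_{n,λ}(α) = X_{1,λ}(α) + ⋯ + X_{n,λ}(α). Then for every real number z, E[(1 + α/λ)^{Y_n}] · E[z^{Z_{n,λ}(α)}] = E[(1 + αz/λ)^{Y_n}]. -/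
open MeasureTheory ProbabilityTheory Finset

/-- Integral of a finset product of independent integrable real random variables. -/
lemma aux_integral_finset_prod {ι : Type*} {Ω : Type*} [MeasurableSpace Ω]
    {μ : Measure Ω} [IsProbabilityMeasure μ] {g : ι → Ω → ℝ}
    (hindep : iIndepFun g μ)
    (hmeas : ∀ i, Measurable (g i)) (hint : ∀ i, Integrable (g i) μ)
    (s : Finset ι) :
    Integrable (fun ω => ∏ i ∈ s, g i ω) μ ∧
      (∫ ω, ∏ i ∈ s, g i ω ∂μ) = ∏ i ∈ s, ∫ ω, g i ω ∂μ := by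
  classical
  induction s using Finset.induction_on with
  | empty => simp
  | @insert a s ha ih =>
    have hIF : IndepFun (∏ j ∈ s, g j) (g a) μ :=
      hindep.indepFun_finset_prod_of_notMem hmeas ha
    have hps : (∏ j ∈ s, g j) = fun ω => ∏ j ∈ s, g j ω := by
      funext ω; simp [Finset.prod_apply]
    rw [hps] at hIF
    have hint' : Integrable (fun ω => ∏ i ∈ s, g i ω) μ := ih.1
    have hmul : Integrable ((fun ω => ∏ i ∈ s, g i ω) * g a) μ :=
      hIF.integrable_mul hint' (hint a)
    have heq : (fun ω => ∏ i ∈ insert a s, g i ω)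
        = (fun ω => ∏ i ∈ s, g i ω) * g a := by
      funext ω; simp [Finset.prod_insert ha, mul_comm]
    constructor
    · rw [heq]; exact hmul
    · rw [heq, hIF.integral_mul_eq_mul_integral hint'.aestronglyMeasurable (hint a).aestronglyMeasurable,
        Finset.prod_insert ha, ih.2, mul_comm]

/-- Integral of `c ^ X` for a `{0,1}`-valued random variable. -/
lemma aux_integral_pow_bernoulli {Ω : Type*} [MeasurableSpace Ω]
    {μ : Measure Ω} [IsProbabilityMeasure μ] {X : Ω → ℕ} (hmeas : Measurable X)
    (hval : ∀ ω, X ω = 0 ∨ X ω = 1) {p : ℝ} (hp : 0 ≤ p)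
    (hμ : μ {ω | X ω = 1} = ENNReal.ofReal p) (c : ℝ) :
    (∫ ω, c ^ X ω ∂μ) = 1 + (c - 1) * p := by
  have hms : MeasurableSet {ω | X ω = 1} := hmeas (measurableSet_singleton 1)
  have heq : (fun ω => c ^ X ω)
      = fun ω => 1 + Set.indicator {ω | X ω = 1} (fun _ => c - 1) ω := by
    funext ω
    rcases hval ω with h | h
    · have : ω ∉ {ω | X ω = 1} := by simp [h]
      simp [h, Set.indicator_of_notMem this]
    · have : ω ∈ {ω | X ω = 1} := h
      simp [h, Set.indicator_of_mem this]
  rw [heq]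
  have hind : Integrable (fun ω => Set.indicator {ω | X ω = 1} (fun _ => c - 1) ω) μ := by
    exact (integrable_indicator_iff hms).2 (integrableOn_const (measure_ne_top μ _))
  rw [integral_add (integrable_const 1) hind, integral_const,
    integral_indicator_const _ hms, measureReal_def, measureReal_def, hμ]
  simp [ENNReal.toReal_ofReal hp, mul_comm]

/-- Integral of `c ^ (sum of independent Bernoullis)`. -/
lemma aux_integral_pow_sum {Ω : Type*} [MeasurableSpace Ω]
    (μ : Measure Ω) [IsProbabilityMeasure μ] (n : ℕ) (X : ℕ → Ω → ℕ)
    (hmeas : ∀ j, Measurable (X j))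
    (hindep : iIndepFun (fun i : Fin n => X (i.1 + 1)) μ)
    (hval : ∀ j ∈ Finset.Icc 1 n, ∀ ω, X j ω = 0 ∨ X j ω = 1)
    (p : ℕ → ℝ) (hp : ∀ j ∈ Finset.Icc 1 n, 0 ≤ p j)
    (hμ : ∀ j ∈ Finset.Icc 1 n, μ {ω | X j ω = 1} = ENNReal.ofReal (p j)) (c : ℝ) :
    (∫ ω, c ^ (∑ j ∈ Finset.Icc 1 n, X j ω) ∂μ)
      = ∏ i : Fin n, (1 + (c - 1) * p (i.1 + 1)) := by
  have hmem : ∀ i : Fin n, i.1 + 1 ∈ Finset.Icc 1 n := by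
    intro i; simp [Finset.mem_Icc, Nat.succ_le_of_lt i.2]
  have hsum : ∀ ω, (∑ j ∈ Finset.Icc 1 n, X j ω) = ∑ i : Fin n, X (i.1 + 1) ω := by
    intro ω
    rw [Fin.sum_univ_eq_sum_range (fun i => X (i + 1) ω) n]
    rw [← Finset.Ico_add_one_right_eq_Icc, Finset.sum_Ico_eq_sum_range]
    simp [Nat.add_comm 1]
  set g : Fin n → Ω → ℝ := fun i ω => c ^ X (i.1 + 1) ω with hg
  have hgindep : iIndepFun g μ := by
    have := hindep.comp (fun _ (k : ℕ) => c ^ k) (fun _ => measurable_from_top)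
    exact this
  have hgmeas : ∀ i, Measurable (g i) :=
    fun i => measurable_from_top.comp (hmeas (i.1 + 1))
  have hgint : ∀ i, Integrable (g i) μ := by
    intro i
    have hb : ∀ ω, ‖g i ω‖ ≤ max 1 ‖c‖ := by
      intro ω
      rcases hval (i.1 + 1) (hmem i) ω with h | h
      · simp [hg, h]
      · simp [hg, h]
    exact (integrable_const (max 1 ‖c‖)).mono' (hgmeas i).aestronglyMeasurable
      (ae_of_all _ hb)
  have key := aux_integral_finset_prod hgindep hgmeas hgint Finset.univ
  have heq : (fun ω => c ^ (∑ j ∈ Finset.Icc 1 n, X j ω))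
      = fun ω => ∏ i : Fin n, g i ω := by
    funext ω
    rw [hsum ω, ← Finset.prod_pow_eq_pow_sum]
  calc (∫ ω, c ^ (∑ j ∈ Finset.Icc 1 n, X j ω) ∂μ)
      = ∫ ω, ∏ i : Fin n, g i ω ∂μ := by rw [← heq]
    _ = ∏ i : Fin n, ∫ ω, g i ω ∂μ := key.2
    _ = ∏ i : Fin n, (1 + (c - 1) * p (i.1 + 1)) := by
        refine Finset.prod_congr rfl fun i _ => ?_
        exact aux_integral_pow_bernoulli (hmeas _) (hval _ (hmem i))
          (hp _ (hmem i)) (hμ _ (hmem i)) c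

/-- dimorphic property, Theorem 2: with `Y = X 1 + ⋯ + X n` a sum of
independent Bernoulli random variables with success probabilities `1/j`, and
`Z = X' 1 + ⋯ + X' n` a sum of independent Bernoulli random variables with success
probabilities `α/(α + λj)`, one has for every real `z`
`E[(1 + α/λ)^Y] ⬝ E[z^Z] = E[(1 + αz/λ)^Y]`. -/
theorem dimorphic_property_bernoulli
    {Ω₁ : Type*} [MeasurableSpace Ω₁] (μ₁ : Measure Ω₁) [IsProbabilityMeasure μ₁]
    {Ω₂ : Type*} [MeasurableSpace Ω₂] (μ₂ : Measure Ω₂) [IsProbabilityMeasure μ₂]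
    (α l : ℝ) (hα : 0 < α) (hl : l ∈ Set.Ioo (0 : ℝ) 1)
    (n : ℕ) (hn : 0 < n)
    (X : ℕ → Ω₁ → ℕ)
    (hXmeas : ∀ j, Measurable (X j))
    (hXindep : iIndepFun (fun i : Fin n => X (i.1 + 1)) μ₁)
    (hXval : ∀ j ∈ Finset.Icc 1 n, ∀ ω, X j ω = 0 ∨ X j ω = 1)
    (hXp1 : ∀ j ∈ Finset.Icc 1 n, μ₁ {ω | X j ω = 1} = ENNReal.ofReal (1 / (j : ℝ)))
    (hXp0 : ∀ j ∈ Finset.Icc 1 n, μ₁ {ω | X j ω = 0} = ENNReal.ofReal (1 - 1 / (j : ℝ)))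
    (X' : ℕ → Ω₂ → ℕ)
    (hX'meas : ∀ j, Measurable (X' j))
    (hX'indep : iIndepFun (fun i : Fin n => X' (i.1 + 1)) μ₂)
    (hX'val : ∀ j ∈ Finset.Icc 1 n, ∀ ω, X' j ω = 0 ∨ X' j ω = 1)
    (hX'p1 : ∀ j ∈ Finset.Icc 1 n,
      μ₂ {ω | X' j ω = 1} = ENNReal.ofReal (α / (α + l * j)))
    (hX'p0 : ∀ j ∈ Finset.Icc 1 n,
      μ₂ {ω | X' j ω = 0} = ENNReal.ofReal (1 - α / (α + l * j))) :
    ∀ z : ℝ,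
      (∫ ω, (1 + α / l) ^ (∑ j ∈ Finset.Icc 1 n, X j ω) ∂μ₁)
        * (∫ ω, z ^ (∑ j ∈ Finset.Icc 1 n, X' j ω) ∂μ₂)
      = ∫ ω, (1 + α * z / l) ^ (∑ j ∈ Finset.Icc 1 n, X j ω) ∂μ₁ := by
  intro z
  obtain ⟨hl0, hl1⟩ := hl
  have hjpos : ∀ j ∈ Finset.Icc 1 n, (0 : ℝ) < j := by
    intro j hj
    have := (Finset.mem_Icc.1 hj).1
    exact_mod_cast Nat.lt_of_lt_of_le Nat.zero_lt_one this
  have hp1 : ∀ j ∈ Finset.Icc 1 n, (0 : ℝ) ≤ 1 / (j : ℝ) := by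
    intro j hj; positivity
  have hp2 : ∀ j ∈ Finset.Icc 1 n, (0 : ℝ) ≤ α / (α + l * j) := by
    intro j hj
    have := hjpos j hj
    positivity
  rw [aux_integral_pow_sum μ₁ n X hXmeas hXindep hXval _ hp1 hXp1 (1 + α / l),
    aux_integral_pow_sum μ₂ n X' hX'meas hX'indep hX'val _ hp2 hX'p1 z,
    aux_integral_pow_sum μ₁ n X hXmeas hXindep hXval _ hp1 hXp1 (1 + α * z / l),
    ← Finset.prod_mul_distrib]
  refine Finset.prod_congr rfl fun i _ => ?_
  have hmem : i.1 + 1 ∈ Finset.Icc 1 n := by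
    simp [Finset.mem_Icc, Nat.succ_le_of_lt i.2]
  set j : ℝ := ((i.1 + 1 : ℕ) : ℝ) with hj
  have hjpos' : (0 : ℝ) < j := hjpos _ hmem
  have hjne : j ≠ 0 := ne_of_gt hjpos'
  have hlne : l ≠ 0 := ne_of_gt hl0
  have hden : α + l * j ≠ 0 := by positivity
  field_simp
  ring
end

section
/- Let λ ≠ 0 be a real number, let n be a positive integer, let (X_j)_{1≤j≤n} be independent Bernoulli random variables with P{X_j = 1} = 1/j, and set Y_n = X_1 + ⋯ + X_n. Then for every real number x, the degenerate falling factorial satisfies (x)_{n+1,λ} = x(x - λ)(x - 2λ)⋯(x - nλ) = n! (-1)^n λ^n x E[(1 - x/λ)^{Y_n}]. -/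
open MeasureTheory ProbabilityTheory Finset

/-- The degenerate falling factorial `(x)_{m,λ} = x(x-λ)⋯(x-(m-1)λ)`, with `(x)_{0,λ} = 1`. -/
def degFallingFactorial (l x : ℝ) : ℕ → ℝ
  | 0 => 1
  | m + 1 => degFallingFactorial l x m * (x - m * l)

lemma integral_prod_of_iIndep {ι Ω : Type*} [MeasurableSpace Ω] {μ : Measure Ω}
    [IsProbabilityMeasure μ] {f : ι → Ω → ℝ}
    (hindep : iIndepFun f μ) (hmeas : ∀ i, Measurable (f i))
    (s : Finset ι) :
    ∫ ω, ∏ i ∈ s, f i ω ∂μ = ∏ i ∈ s, ∫ ω, f i ω ∂μ := by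
  classical
  induction s using Finset.induction_on with
  | empty => simp
  | @insert a s ha ih =>
    have hind : IndepFun (∏ j ∈ s, f j) (f a) μ :=
      hindep.indepFun_finset_prod_of_notMem hmeas ha
    have hp : (∏ j ∈ s, f j) = fun a => ∏ i ∈ s, f i a :=
      funext fun a => Finset.prod_apply a s f
    have hmul := hind.symm.integral_mul_eq_mul_integral (hmeas a).aestronglyMeasurable
      (by rw [hp]; exact (Finset.measurable_prod s fun i _ => hmeas i).aestronglyMeasurable)
    simp only [Finset.prod_apply, Pi.mul_apply] at hmul
    rw [Finset.prod_insert ha]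
    simp_rw [Finset.prod_insert ha]
    rw [hmul, ih]

/-- For `λ ≠ 0` and `Y = X 1 + ⋯ + X n` a sum of independent Bernoulli random
variables with success probabilities `1/j`, for every real `x`,
`(x)_{n+1,λ} = x(x-λ)(x-2λ)⋯(x-nλ) = n! (-1)^n λ^n x E[(1 - x/λ)^Y]`. -/
theorem degFallingFactorial_eq_expectation
    {Ω : Type*} [MeasurableSpace Ω] (μ : Measure Ω) [IsProbabilityMeasure μ]
    (l : ℝ) (hl : l ≠ 0)
    (n : ℕ) (hn : 0 < n) (X : ℕ → Ω → ℕ)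
    (hmeas : ∀ j, Measurable (X j))
    (hindep : iIndepFun (fun i : Fin n => X (i.1 + 1)) μ)
    (hval : ∀ j ∈ Finset.Icc 1 n, ∀ ω, X j ω = 0 ∨ X j ω = 1)
    (hp1 : ∀ j ∈ Finset.Icc 1 n, μ {ω | X j ω = 1} = ENNReal.ofReal (1 / (j : ℝ)))
    (hp0 : ∀ j ∈ Finset.Icc 1 n, μ {ω | X j ω = 0} = ENNReal.ofReal (1 - 1 / (j : ℝ))) :
    ∀ x : ℝ,
      degFallingFactorial l x (n + 1) = ∏ k ∈ Finset.range (n + 1), (x - k * l) ∧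
      degFallingFactorial l x (n + 1)
        = (Nat.factorial n : ℝ) * (-1) ^ n * l ^ n * x
            * ∫ ω, (1 - x / l) ^ (∑ j ∈ Finset.Icc 1 n, X j ω) ∂μ := by
  intro x
  -- Part 1: product formula
  have hprod : ∀ m : ℕ, degFallingFactorial l x m = ∏ k ∈ Finset.range m, (x - k * l) := by
    intro m
    induction m with
    | zero => simp [degFallingFactorial]
    | succ m ih => rw [degFallingFactorial, ih, Finset.prod_range_succ]
  refine ⟨hprod (n + 1), ?_⟩
  set t : ℝ := 1 - x / l with ht
  -- rewrite sum over Icc as sum over Fin n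
  have hsum : ∀ ω, ∑ j ∈ Finset.Icc 1 n, X j ω = ∑ i : Fin n, X (i.1 + 1) ω := by
    intro ω
    rw [Fin.sum_univ_eq_sum_range (fun i => X (i + 1) ω) n]
    rw [← Finset.Ico_add_one_right_eq_Icc, Finset.sum_Ico_eq_sum_range]
    simp [add_comm]
  -- expectation of product equals product of expectations
  have hcomp : iIndepFun
      (fun (i : Fin n) (ω : Ω) => t ^ X (i.1 + 1) ω) μ := by
    exact hindep.comp (fun _ m => t ^ m) (fun _ => measurable_from_top)
  have hmeas' : ∀ i : Fin n, Measurable (fun ω => t ^ X (i.1 + 1) ω) :=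
    fun i => measurable_from_top.comp (hmeas (i.1 + 1))
  have hInt : ∫ ω, t ^ (∑ j ∈ Finset.Icc 1 n, X j ω) ∂μ
      = ∏ i : Fin n, ∫ ω, t ^ X (i.1 + 1) ω ∂μ := by
    rw [← integral_prod_of_iIndep hcomp hmeas' Finset.univ]
    congr 1
    ext ω
    rw [hsum ω, ← Finset.prod_pow_eq_pow_sum]
  -- single expectation
  have hone : ∀ i : Fin n, ∫ ω, t ^ X (i.1 + 1) ω ∂μ = 1 + (t - 1) / (i.1 + 1) := by
    intro i
    have hj : (i.1 + 1) ∈ Finset.Icc 1 n := by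
      simp [Nat.succ_le_iff, i.2]
    set A : Set Ω := {ω | X (i.1 + 1) ω = 1} with hA
    have hAm : MeasurableSet A := hmeas (i.1 + 1) (measurableSet_singleton 1)
    have hfun : ∀ ω, t ^ X (i.1 + 1) ω = 1 + Set.indicator A (fun _ => t - 1) ω := by
      intro ω
      rcases hval _ hj ω with h0 | h1
      · have : ω ∉ A := by simp [hA, h0]
        simp [h0, Set.indicator_of_notMem this]
      · have : ω ∈ A := h1
        simp [h1, Set.indicator_of_mem this]
    rw [integral_congr_ae (Filter.Eventually.of_forall hfun)]
    rw [integral_add (integrable_const 1) ((integrable_const (t - 1)).indicator hAm)]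
    rw [integral_indicator_const _ hAm]
    have hμA : (μ A).toReal = 1 / (i.1 + 1 : ℝ) := by
      rw [hp1 _ hj, ENNReal.toReal_ofReal (by positivity)]
      push_cast
      ring
    simp [measureReal_def, hμA]
    ring
  rw [hprod (n + 1), hInt]
  rw [Finset.prod_congr rfl (fun i _ => hone i)]
  -- now pure algebra
  rw [Fin.prod_univ_eq_prod_range (fun i => 1 + (t - 1) / (i + 1 : ℝ)) n]
  have hfact : (Nat.factorial n : ℝ) = ∏ k ∈ Finset.range n, ((k : ℝ) + 1) := by
    rw [← Finset.prod_range_add_one_eq_factorial]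
    push_cast
    rfl
  have key : ∀ k ∈ Finset.range n,
      ((k : ℝ) + 1) * (-1) * l * (1 + (t - 1) / ((k : ℝ) + 1)) = x - ((k : ℝ) + 1) * l := by
    intro k _
    have hk1 : ((k : ℝ) + 1) ≠ 0 := by positivity
    rw [ht]
    field_simp
    ring
  rw [hfact, Finset.prod_range_succ']
  simp only [Nat.cast_zero, zero_mul, sub_zero, Nat.cast_add, Nat.cast_one]
  rw [← Finset.prod_congr rfl key]
  simp only [Finset.prod_mul_distrib, Finset.prod_const, Finset.card_range]
  ring
end

section
/- Let λ ≠ 0 be a real number, let n be a positive integer, let (X_j)_{1≤j≤n} be independent Bernoulli random variables with P{X_j = 1} = 1/j, and set Y_n = X_1 + ⋯ + X_n. Then for every real number x, x(x - λ)(x - 2λ)⋯(x - nλ) = Σ_{l=0}^{n} (-1)^{n-l} λ^{n-l} n! E[binom(Y_n, l)] x^{l+1}, where binom(Y_n, l) denotes the binomial coefficient of Y_n choose l. -/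
open MeasureTheory ProbabilityTheory Finset

lemma my_prod_Icc_id_factorial (n : ℕ) : ∏ j ∈ Finset.Icc 1 n, j = Nat.factorial n := by
  induction n with
  | zero => simp
  | succ n ih =>
    rw [Finset.prod_Icc_succ_top (by omega), ih, Nat.factorial_succ, mul_comm]

lemma my_choose_sum (s : Finset ℕ) (f : ℕ → ℕ)
    (hf : ∀ j ∈ s, f j = 0 ∨ f j = 1) (m : ℕ) :
    (∑ j ∈ s, f j).choose m = ∑ S ∈ s.powersetCard m, ∏ j ∈ S, f j := by
  classical
  set T := s.filter (fun j => f j ≠ 0) with hT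
  have hTs : T ⊆ s := Finset.filter_subset _ _
  have hfT : ∀ j ∈ T, f j = 1 := by
    intro j hj
    rcases Finset.mem_filter.1 hj with ⟨hjs, hj0⟩
    rcases hf j hjs with h | h
    · exact absurd h hj0
    · exact h
  have hsum : ∑ j ∈ s, f j = T.card := by
    rw [← Finset.sum_filter_ne_zero, ← hT]
    calc ∑ j ∈ T, f j = ∑ _j ∈ T, 1 := Finset.sum_congr rfl hfT
    _ = T.card := by simp
  have hval : ∀ S ∈ s.powersetCard m, ∏ j ∈ S, f j = if S ⊆ T then 1 else 0 := by
    intro S hS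
    rcases Finset.mem_powersetCard.1 hS with ⟨hSs, _⟩
    by_cases h : S ⊆ T
    · rw [if_pos h]; exact Finset.prod_eq_one fun j hj => hfT j (h hj)
    · rw [if_neg h]
      obtain ⟨j, hjS, hjT⟩ := Finset.not_subset.1 h
      refine Finset.prod_eq_zero hjS ?_
      rcases hf j (hSs hjS) with h0 | h1
      · exact h0
      · exact absurd (Finset.mem_filter.2 ⟨hSs hjS, by simp [h1]⟩) hjT
  rw [hsum, Finset.sum_congr rfl hval, ← Finset.card_filter]
  have hfilter : (s.powersetCard m).filter (fun S => S ⊆ T) = T.powersetCard m := by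
    ext S
    simp only [Finset.mem_filter, Finset.mem_powersetCard]
    constructor
    · rintro ⟨⟨_, hc⟩, hST⟩; exact ⟨hST, hc⟩
    · rintro ⟨hST, hc⟩; exact ⟨⟨hST.trans hTs, hc⟩, hST⟩
  rw [hfilter]
  simp [Finset.card_powersetCard]

lemma my_algebra (n : ℕ) (l x : ℝ) :
    ∏ k ∈ Finset.range (n + 1), (x - k * l)
      = ∑ m ∈ Finset.range (n + 1),
          (-1) ^ (n - m) * l ^ (n - m) * (Nat.factorial n : ℝ)
            * (∑ S ∈ (Finset.Icc 1 n).powersetCard m, ∏ j ∈ S, (1/(j:ℝ)))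
            * x ^ (m + 1) := by
  classical
  have hrange : Finset.range (n + 1) = insert 0 (Finset.Icc 1 n) := by
    ext k; simp [Nat.lt_succ_iff]; omega
  have h0 : (0 : ℕ) ∉ Finset.Icc 1 n := by simp
  have hfac : ∀ j ∈ Finset.Icc 1 n, x - (j : ℝ) * l = (j : ℝ) * (x * (1 / (j:ℝ)) + (-l)) := by
    intro j hj
    have hj1 : 1 ≤ j := (Finset.mem_Icc.1 hj).1
    have : (j : ℝ) ≠ 0 := by positivity
    field_simp
    ring
  have hcastfac : ∏ j ∈ Finset.Icc 1 n, (j : ℝ) = (Nat.factorial n : ℝ) := by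
    rw [← Nat.cast_prod, my_prod_Icc_id_factorial]
  have hcard : (Finset.Icc 1 n).card = n := by
    simp [Nat.card_Icc]
  have hIcc : ∏ j ∈ Finset.Icc 1 n, (x - (j:ℝ) * l)
      = ∑ m ∈ Finset.range (n+1), ∑ S ∈ (Finset.Icc 1 n).powersetCard m,
          (Nat.factorial n : ℝ) * ((x ^ m * ∏ j ∈ S, (1/(j:ℝ))) * ((-1)^(n-m) * l^(n-m))) := by
    rw [Finset.prod_congr rfl hfac, Finset.prod_mul_distrib, hcastfac, Finset.prod_add,
        Finset.mul_sum, Finset.sum_powerset, hcard]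
    refine Finset.sum_congr rfl fun m _ => Finset.sum_congr rfl fun S hS => ?_
    rcases Finset.mem_powersetCard.1 hS with ⟨hSs, hScard⟩
    have h1 : ∏ j ∈ S, (x * (1 / (j:ℝ))) = x ^ m * ∏ j ∈ S, (1 / (j:ℝ)) := by
      rw [Finset.prod_mul_distrib, Finset.prod_const, hScard]
    have h2 : ∏ j ∈ (Finset.Icc 1 n) \ S, (-l) = (-1)^(n - m) * l^(n - m) := by
      rw [Finset.prod_const, Finset.card_sdiff_of_subset hSs, hcard, hScard, neg_pow]
    rw [h1, h2]
  calc ∏ k ∈ Finset.range (n + 1), (x - k * l)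
      = x * ∏ j ∈ Finset.Icc 1 n, (x - (j:ℝ) * l) := by
        rw [hrange, Finset.prod_insert h0]; norm_num
    _ = x * ∑ m ∈ Finset.range (n+1), ∑ S ∈ (Finset.Icc 1 n).powersetCard m,
          (Nat.factorial n : ℝ) * ((x ^ m * ∏ j ∈ S, (1/(j:ℝ))) * ((-1)^(n-m) * l^(n-m))) := by
        rw [hIcc]
    _ = _ := by
        simp only [Finset.mul_sum, Finset.sum_mul]
        refine Finset.sum_congr rfl fun m _ => Finset.sum_congr rfl fun S _ => ?_
        ring

lemma my_reindex {M : Type*} [CommMonoid M] (n : ℕ) (S : Finset ℕ) (hS : S ⊆ Finset.Icc 1 n)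
    (f : ℕ → M) :
    ∏ i ∈ Finset.univ.filter (fun i : Fin n => i.1 + 1 ∈ S), f (i.1 + 1) = ∏ j ∈ S, f j := by
  classical
  have hinj : Function.Injective (fun i : Fin n => i.1 + 1) := by
    intro a b h
    simp only at h
    exact Fin.ext (by omega)
  set e : Fin n ↪ ℕ := ⟨fun i => i.1 + 1, hinj⟩ with he
  have hmap : Finset.map e (Finset.univ.filter (fun i : Fin n => i.1 + 1 ∈ S)) = S := by
    ext j
    simp only [Finset.mem_map, Finset.mem_filter, Finset.mem_univ, true_and, he,
      Function.Embedding.coeFn_mk]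
    constructor
    · rintro ⟨i, hi, rfl⟩; exact hi
    · intro hj
      have := Finset.mem_Icc.1 (hS hj)
      exact ⟨⟨j - 1, by omega⟩, by simpa using (by omega : j - 1 + 1 = j) ▸ hj, by simp; omega⟩
  conv_rhs => rw [← hmap]
  rw [Finset.prod_map]
  rfl

/-- For `λ ≠ 0` and `Y = X 1 + ⋯ + X n` a sum of independent Bernoulli random
variables with success probabilities `1/j`, for every real `x`,
`x(x-λ)(x-2λ)⋯(x-nλ) = ∑_{l=0}^{n} (-1)^{n-l} λ^{n-l} n! E[C(Y,l)] x^{l+1}`. -/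
theorem degFallingFactorial_expansion_expectation_choose
    {Ω : Type*} [MeasurableSpace Ω] (μ : Measure Ω) [IsProbabilityMeasure μ]
    (l : ℝ) (hl : l ≠ 0)
    (n : ℕ) (hn : 0 < n) (X : ℕ → Ω → ℕ)
    (hmeas : ∀ j, Measurable (X j))
    (hindep : iIndepFun (fun i : Fin n => X (i.1 + 1)) μ)
    (hval : ∀ j ∈ Finset.Icc 1 n, ∀ ω, X j ω = 0 ∨ X j ω = 1)
    (hp1 : ∀ j ∈ Finset.Icc 1 n, μ {ω | X j ω = 1} = ENNReal.ofReal (1 / (j : ℝ)))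
    (hp0 : ∀ j ∈ Finset.Icc 1 n, μ {ω | X j ω = 0} = ENNReal.ofReal (1 - 1 / (j : ℝ))) :
    ∀ x : ℝ,
      ∏ k ∈ Finset.range (n + 1), (x - k * l)
        = ∑ m ∈ Finset.range (n + 1),
            (-1) ^ (n - m) * l ^ (n - m) * (Nat.factorial n : ℝ)
              * (∫ ω, ((∑ j ∈ Finset.Icc 1 n, X j ω).choose m : ℝ) ∂μ)
              * x ^ (m + 1) := by
  classical
  intro x
  have hcast : Measurable (fun k : ℕ => (k : ℝ)) := measurable_from_top
  have hmeasprod : ∀ (S : Finset ℕ), Measurable (fun ω => ∏ j ∈ S, (X j ω : ℝ)) :=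
    fun S => Finset.measurable_prod _ fun j _ => hcast.comp (hmeas j)
  have hint : ∀ (S : Finset ℕ), S ⊆ Finset.Icc 1 n →
      Integrable (fun ω => ∏ j ∈ S, (X j ω : ℝ)) μ := by
    intro S hS
    refine (integrable_const (1:ℝ)).mono' (hmeasprod S).aestronglyMeasurable ?_
    refine Filter.Eventually.of_forall fun ω => ?_
    have h0 : (0:ℝ) ≤ ∏ j ∈ S, (X j ω : ℝ) := Finset.prod_nonneg fun j _ => by positivity
    have h1 : ∏ j ∈ S, (X j ω : ℝ) ≤ 1 :=
      Finset.prod_le_one (fun j _ => by positivity)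
        (fun j hj => by rcases hval j (hS hj) ω with h | h <;> simp [h])
    rw [Real.norm_eq_abs, abs_of_nonneg h0]; exact h1
  have hX1 : ∀ j ∈ Finset.Icc 1 n, ∫ ω, (X j ω : ℝ) ∂μ = 1 / (j : ℝ) := by
    intro j hj
    have hset : MeasurableSet {ω | X j ω = 1} := hmeas j (measurableSet_singleton 1)
    have heq : (fun ω => (X j ω : ℝ)) = Set.indicator {ω | X j ω = 1} (fun _ => (1:ℝ)) := by
      funext ω
      rcases hval j hj ω with h | h <;> simp [Set.indicator_apply, h, Set.mem_setOf_eq]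
    rw [heq, MeasureTheory.integral_indicator_const _ hset, measureReal_def, hp1 j hj, smul_eq_mul, mul_one,
      ENNReal.toReal_ofReal (by positivity)]
  have hprodE : ∀ (S : Finset ℕ), S ⊆ Finset.Icc 1 n →
      ∫ ω, ∏ j ∈ S, (X j ω : ℝ) ∂μ = ∏ j ∈ S, (1 / (j : ℝ)) := by
    intro S
    induction S using Finset.induction_on with
    | empty => intro _; simp
    | @insert a S ha ih =>
      intro hsub
      have haIcc : a ∈ Finset.Icc 1 n := hsub (Finset.mem_insert_self _ _)
      have hSsub : S ⊆ Finset.Icc 1 n := fun j hj => hsub (Finset.mem_insert_of_mem hj)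
      have ha1 : 1 ≤ a := (Finset.mem_Icc.1 haIcc).1
      have han : a ≤ n := (Finset.mem_Icc.1 haIcc).2
      set i0 : Fin n := ⟨a - 1, by omega⟩ with hi0
      have hi0a : i0.1 + 1 = a := by simp [hi0]; omega
      set S' : Finset (Fin n) := Finset.univ.filter (fun i : Fin n => i.1 + 1 ∈ S) with hS'
      have hi0S' : i0 ∉ S' := by simp [hS', hi0a, ha]
      have hindep1 : IndepFun (∏ i ∈ S', (fun i : Fin n => X (i.1+1)) i) (X (i0.1+1)) μ :=
        hindep.indepFun_finset_prod_of_notMem (fun i => hmeas _) hi0S'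
      have hindep2 : IndepFun (fun ω => ∏ j ∈ S, (X j ω : ℝ)) (fun ω => (X a ω : ℝ)) μ := by
        have h2 := hindep1.comp hcast hcast
        convert h2 using 1
        · funext ω
          simp only [Function.comp_apply, Finset.prod_apply, Nat.cast_prod]
          exact (my_reindex n S hSsub (fun j => (X j ω : ℝ))).symm
        · funext ω
          simp [hi0a]
      have hintS : Integrable (fun ω => ∏ j ∈ S, (X j ω : ℝ)) μ := hint S hSsub
      have hinta : Integrable (fun ω => (X a ω : ℝ)) μ := by
        have := hint {a} (by simpa using haIcc)
        simpa using this
      have key : ∫ ω, (fun ω => ∏ j ∈ S, (X j ω : ℝ)) ω * (fun ω => (X a ω : ℝ)) ω ∂μ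
          = (∫ ω, ∏ j ∈ S, (X j ω : ℝ) ∂μ) * ∫ ω, (X a ω : ℝ) ∂μ :=
        hindep2.integral_mul_eq_mul_integral hintS.aestronglyMeasurable hinta.aestronglyMeasurable
      simp only [Finset.prod_insert ha]
      simp only at key
      calc ∫ ω, (X a ω : ℝ) * ∏ j ∈ S, (X j ω : ℝ) ∂μ
          = ∫ ω, (∏ j ∈ S, (X j ω : ℝ)) * (X a ω : ℝ) ∂μ := by
            congr 1; funext ω; ring
        _ = (∫ ω, ∏ j ∈ S, (X j ω : ℝ) ∂μ) * ∫ ω, (X a ω : ℝ) ∂μ := key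
        _ = (1 / (a:ℝ)) * ∏ j ∈ S, (1 / (j:ℝ)) := by rw [ih hSsub, hX1 a haIcc]; ring
  have hE : ∀ m, (∫ ω, ((∑ j ∈ Finset.Icc 1 n, X j ω).choose m : ℝ) ∂μ)
      = ∑ S ∈ (Finset.Icc 1 n).powersetCard m, ∏ j ∈ S, (1/(j:ℝ)) := by
    intro m
    have hpt : ∀ ω, ((∑ j ∈ Finset.Icc 1 n, X j ω).choose m : ℝ)
        = ∑ S ∈ (Finset.Icc 1 n).powersetCard m, ∏ j ∈ S, (X j ω : ℝ) := by
      intro ω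
      rw [my_choose_sum _ _ (fun j hj => hval j hj ω) m]
      push_cast
      rfl
    simp only [hpt]
    rw [MeasureTheory.integral_finset_sum]
    · exact Finset.sum_congr rfl fun S hS => hprodE S (Finset.mem_powersetCard.1 hS).1
    · intro S hS
      exact hint S (Finset.mem_powersetCard.1 hS).1
  simp only [hE]
  exact my_algebra n l x
end

section
/- Let λ ≠ 0 be a real number, let n be a positive integer, let (X_j)_{1≤j≤n} be independent Bernoulli random variables with P{X_j = 1} = 1/j, and set Y_n = X_1 + ⋯ + X_n. Let S_1 : ℕ × ℕ → ℝ satisfy the defining identity of the Stirling numbers of the first kind, namely x(x-1)⋯(x-m+1) = Σ_{l=0}^{m} S_1(m,l) x^l for all real x and all m ≥ 0, and let S_{2,λ} : ℕ × ℕ → ℝ satisfy the defining identity of the degenerate Stirling numbers of the second kind, namely x(x-λ)⋯(x-(m-1)λ) = Σ_{l=0}^{m} S_{2,λ}(m,l) · x(x-1)⋯(x-l+1) for all real x and all m ≥ 0. Then for every integer l with 0 ≤ l ≤ n, Σ_{m=l}^{n} S_{2,λ}(n+1, m+1) S_1(m+1, l+1) = (-1)^{n-l} λ^{n-l} n! E[binom(Y_n,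 l)]. -/
open MeasureTheory ProbabilityTheory Finset Polynomial


lemma coeff_unique_aux (N : ℕ) (a b : ℕ → ℝ)
    (h : ∀ x : ℝ, ∑ i ∈ range N, a i * x ^ i = ∑ i ∈ range N, b i * x ^ i) :
    ∀ i ∈ range N, a i = b i := by
  have hpq : (∑ i ∈ range N, C (a i) * X ^ i) = ∑ i ∈ range N, C (b i) * X ^ i := by
    apply Polynomial.funext
    intro r
    simpa [eval_finset_sum] using h r
  intro i hi
  have := congrArg (fun p => Polynomial.coeff p i) hpq
  simpa [finset_sum_coeff, coeff_C_mul, coeff_X_pow, Finset.sum_ite_eq' (range N) i,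
    hi] using this

lemma choose_sum_eq (s : Finset ℕ) (x : ℕ → ℕ) (hx : ∀ j ∈ s, x j = 0 ∨ x j = 1) (k : ℕ) :
    (∑ j ∈ s, x j).choose k = ∑ t ∈ s.powersetCard k, ∏ j ∈ t, x j := by
  classical
  set A := s.filter (fun j => x j = 1) with hA
  have hmemA : ∀ j, j ∈ A ↔ j ∈ s ∧ x j = 1 := fun j => Finset.mem_filter
  have hsum : ∑ j ∈ s, x j = A.card := by
    rw [← Finset.sum_subset (Finset.filter_subset _ s) (by
      intro j hj hj'
      rcases hx j hj with h0 | h1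
      · exact h0
      · exact absurd ((hmemA j).2 ⟨hj, h1⟩) hj')]
    rw [Finset.card_eq_sum_ones]
    exact Finset.sum_congr rfl (fun j hj => ((hmemA j).1 hj).2)
  have hprod : ∀ t ∈ s.powersetCard k, ∏ j ∈ t, x j = if t ⊆ A then 1 else 0 := by
    intro t ht
    rcases Finset.mem_powersetCard.1 ht with ⟨hts, htc⟩
    by_cases hTA : t ⊆ A
    · rw [if_pos hTA]
      exact Finset.prod_eq_one (fun j hj => ((hmemA j).1 (hTA hj)).2)
    · rw [if_neg hTA]
      obtain ⟨j, hjt, hjA⟩ := Finset.not_subset.1 hTA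
      refine Finset.prod_eq_zero hjt ?_
      rcases hx j (hts hjt) with h0 | h1
      · exact h0
      · exact absurd ((hmemA j).2 ⟨hts hjt, h1⟩) hjA
  have hAs : A ⊆ s := Finset.filter_subset _ s
  rw [Finset.sum_congr rfl hprod, ← Finset.sum_filter, hsum]
  have hfilt : (s.powersetCard k).filter (fun t => t ⊆ A) = A.powersetCard k := by
    ext t
    simp only [Finset.mem_filter, Finset.mem_powersetCard]
    constructor
    · rintro ⟨⟨hts, htc⟩, hta⟩; exact ⟨hta, htc⟩
    · rintro ⟨hta, htc⟩; exact ⟨⟨hta.trans hAs, htc⟩, hta⟩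
  rw [hfilt, ← Finset.card_powersetCard, Finset.card_eq_sum_ones]


lemma expectation_choose_eq
    {Ω : Type*} [MeasurableSpace Ω] (μ : Measure Ω) [IsProbabilityMeasure μ]
    (n : ℕ) (X : ℕ → Ω → ℕ)
    (hmeas : ∀ j, Measurable (X j))
    (hindep : iIndepFun (fun i : Fin n => X (i.1 + 1)) μ)
    (hval : ∀ j ∈ Finset.Icc 1 n, ∀ ω, X j ω = 0 ∨ X j ω = 1)
    (hp1 : ∀ j ∈ Finset.Icc 1 n, μ {ω | X j ω = 1} = ENNReal.ofReal (1 / (j : ℝ)))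
    (k : ℕ)
    (hchoose : ∀ ω, ((∑ j ∈ Finset.Icc 1 n, X j ω).choose k : ℕ)
        = ∑ t ∈ (Finset.Icc 1 n).powersetCard k, ∏ j ∈ t, X j ω) :
    ∫ ω, ((∑ j ∈ Finset.Icc 1 n, X j ω).choose k : ℝ) ∂μ
      = ∑ t ∈ (Finset.Icc 1 n).powersetCard k, ∏ j ∈ t, (1 / (j : ℝ)) := by
  classical
  -- the event and measure for each subset t
  have key : ∀ t ∈ (Finset.Icc 1 n).powersetCard k,
      (fun ω => ∏ j ∈ t, (X j ω : ℝ))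
        = Set.indicator (⋂ j ∈ t, {ω | X j ω = 1}) (fun _ => (1 : ℝ))
      ∧ μ (⋂ j ∈ t, {ω | X j ω = 1}) = ∏ j ∈ t, ENNReal.ofReal (1 / (j : ℝ)) := by
    intro t ht
    rcases Finset.mem_powersetCard.1 ht with ⟨hts, htc⟩
    constructor
    · funext ω
      by_cases hω : ω ∈ ⋂ j ∈ t, {ω | X j ω = 1}
      · rw [Set.indicator_of_mem hω]
        simp only [Set.mem_iInter, Set.mem_setOf_eq] at hω
        exact Finset.prod_eq_one (fun j hj => by rw [hω j hj]; norm_num)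
      · rw [Set.indicator_of_notMem hω]
        simp only [Set.mem_iInter, Set.mem_setOf_eq, not_forall] at hω
        obtain ⟨j, hjt, hj1⟩ := hω
        refine Finset.prod_eq_zero hjt ?_
        rcases hval j (hts hjt) ω with h0 | h1
        · rw [h0]; norm_num
        · exact absurd h1 hj1
    · -- independence computation
      set S : Finset (Fin n) := Finset.univ.filter (fun i => i.1 + 1 ∈ t) with hS
      have hbij : ∀ j, j ∈ t ↔ ∃ i ∈ S, i.1 + 1 = j := by
        intro j
        constructor
        · intro hj
          have hj' := Finset.mem_Icc.1 (hts hj)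
          refine ⟨⟨j - 1, by omega⟩, ?_, show j - 1 + 1 = j by omega⟩
          simp only [hS, Finset.mem_filter, Finset.mem_univ, true_and]
          have : j - 1 + 1 = j := by omega
          rw [this]; exact hj
        · rintro ⟨i, hi, rfl⟩
          simpa only [hS, Finset.mem_filter, Finset.mem_univ, true_and] using hi
      have him : S.image (fun i : Fin n => i.1 + 1) = t := by
        ext j
        simp only [Finset.mem_image]
        rw [hbij j]
      have h1 : (⋂ j ∈ t, {ω | X j ω = 1}) = ⋂ i ∈ S, {ω | X (i.1 + 1) ω = 1} := by
        rw [← him]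
        rw [Finset.set_biInter_finset_image]
      have h2 : μ (⋂ i ∈ S, {ω | X (i.1 + 1) ω = 1})
          = ∏ i ∈ S, μ {ω | X (i.1 + 1) ω = 1} := by
        refine hindep.meas_biInter (fun i _ => ?_)
        exact ⟨{1}, measurableSet_singleton 1, rfl⟩
      rw [h1, h2, ← him, Finset.prod_image (fun a _ b _ hab => Fin.ext (by simpa using hab))]
      exact Finset.prod_congr rfl (fun i hi => hp1 _ (hts (him ▸ Finset.mem_image_of_mem _ hi)))
  -- rewrite integrand
  have hrew : ∀ ω, ((∑ j ∈ Finset.Icc 1 n, X j ω).choose k : ℝ)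
      = ∑ t ∈ (Finset.Icc 1 n).powersetCard k, ∏ j ∈ t, (X j ω : ℝ) := by
    intro ω
    rw [hchoose ω]
    push_cast
    ring
  have hmeasE : ∀ t : Finset ℕ, MeasurableSet (⋂ j ∈ t, {ω | X j ω = 1}) := by
    intro t
    exact MeasurableSet.biInter t.countable_toSet
      (fun j _ => (hmeas j) (measurableSet_singleton 1))
  calc ∫ ω, ((∑ j ∈ Finset.Icc 1 n, X j ω).choose k : ℝ) ∂μ
      = ∫ ω, ∑ t ∈ (Finset.Icc 1 n).powersetCard k, ∏ j ∈ t, (X j ω : ℝ) ∂μ := by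
        exact integral_congr_ae (Filter.Eventually.of_forall hrew)
    _ = ∑ t ∈ (Finset.Icc 1 n).powersetCard k, ∫ ω, ∏ j ∈ t, (X j ω : ℝ) ∂μ := by
        refine integral_finset_sum _ (fun t ht => ?_)
        rw [(key t ht).1]
        exact (integrable_const (1 : ℝ)).indicator (hmeasE t)
    _ = ∑ t ∈ (Finset.Icc 1 n).powersetCard k, ∏ j ∈ t, (1 / (j : ℝ)) := by
        refine Finset.sum_congr rfl (fun t ht => ?_)
        rw [(key t ht).1, integral_indicator_const _ (hmeasE t), measureReal_def, (key t ht).2, smul_eq_mul,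
          mul_one, ENNReal.toReal_prod]
        refine Finset.prod_congr rfl (fun j hj => ENNReal.toReal_ofReal ?_)
        positivity

lemma algebra_main (l : ℝ) (hl : l ≠ 0) (n : ℕ)
    (S₁ : ℕ → ℕ → ℝ)
    (hS₁ : ∀ (m : ℕ) (x : ℝ),
      ∏ k ∈ Finset.range m, (x - k) = ∑ i ∈ Finset.range (m + 1), S₁ m i * x ^ i)
    (S₂ : ℕ → ℕ → ℝ)
    (hS₂ : ∀ (m : ℕ) (x : ℝ),
      ∏ k ∈ Finset.range m, (x - k * l)
        = ∑ i ∈ Finset.range (m + 1), S₂ m i * ∏ k ∈ Finset.range i, (x - k))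
    (k : ℕ) (hk : k ≤ n) :
    ∑ m ∈ Finset.Icc k n, S₂ (n + 1) (m + 1) * S₁ (m + 1) (k + 1)
      = (-1) ^ (n - k) * l ^ (n - k) * (Nat.factorial n : ℝ)
          * ∑ t ∈ (Finset.Icc 1 n).powersetCard k, ∏ j ∈ t, (1 / (j : ℝ)) := by
  classical
  set e : ℕ → ℝ := fun i => ∑ t ∈ (Finset.Icc 1 n).powersetCard i, ∏ j ∈ t, (1 / (j : ℝ))
    with he
  set P : ℕ → ℝ[X] := fun m => ∏ j ∈ range m, (X - C (j : ℝ)) with hP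
  set D : ℝ[X] := ∏ j ∈ range (n + 1), (X - C ((j : ℝ) * l)) with hD
  set Q : ℝ[X] := ∏ j ∈ Icc 1 n, (X + C (j : ℝ)) with hQ
  -- degrees
  have hPdeg : ∀ m, (P m).natDegree = m := by
    intro m
    rw [hP]
    rw [Polynomial.natDegree_prod _ _ (fun j _ => X_sub_C_ne_zero _)]
    simp only [natDegree_X_sub_C, Finset.sum_const, smul_eq_mul, mul_one, card_range]
  have hDdeg : D.natDegree = n + 1 := by
    rw [hD, Polynomial.natDegree_prod _ _ (fun j _ => X_sub_C_ne_zero _)]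
    simp only [natDegree_X_sub_C, Finset.sum_const, smul_eq_mul, mul_one, card_range]
  have hQdeg : Q.natDegree = n := by
    rw [hQ, Polynomial.natDegree_prod _ _ (fun j _ => X_add_C_ne_zero _)]
    simp only [natDegree_X_add_C, Finset.sum_const, smul_eq_mul, mul_one, Nat.card_Icc]
    omega
  -- eval formulas
  have hPeval : ∀ m (x : ℝ), (P m).eval x = ∏ j ∈ range m, (x - j) := by
    intro m x; rw [hP]; simp [eval_prod]
  have hDeval : ∀ x : ℝ, D.eval x = ∏ j ∈ range (n + 1), (x - j * l) := by
    intro x; rw [hD]; simp [eval_prod]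
  have hQeval : ∀ x : ℝ, Q.eval x = ∏ j ∈ Icc 1 n, (x + j) := by
    intro x; rw [hQ]; simp [eval_prod]
  -- S₁ as coefficients of P
  have hS1c : ∀ m, ∀ i ≤ m, (P m).coeff i = S₁ m i := by
    intro m i him
    refine coeff_unique_aux (m + 1) _ _ (fun x => ?_) i (mem_range.2 (by omega))
    rw [← eval_eq_sum_range' (n := m + 1) (by rw [hPdeg m]; omega) x, hPeval, hS₁ m x]
  -- convolution identity : LHS sum = D.coeff (k+1)
  have hDconv : D.coeff (k + 1)
      = ∑ m ∈ Finset.Icc k n, S₂ (n + 1) (m + 1) * S₁ (m + 1) (k + 1) := by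
    have hDrep : D = ∑ m ∈ range (n + 2), C (S₂ (n + 1) m) * P m := by
      apply Polynomial.funext
      intro x
      rw [hDeval]
      rw [eval_finset_sum]
      simp only [eval_mul, eval_C, hPeval]
      exact hS₂ (n + 1) x
    have h1 : D.coeff (k + 1) = ∑ m ∈ range (n + 2), S₂ (n + 1) m * (P m).coeff (k + 1) := by
      rw [hDrep, finset_sum_coeff]
      exact Finset.sum_congr rfl (fun m _ => coeff_C_mul _)
    have h2 : ∑ m ∈ range (n + 2), S₂ (n + 1) m * (P m).coeff (k + 1)
        = ∑ m ∈ Finset.Icc (k + 1) (n + 1), S₂ (n + 1) m * (P m).coeff (k + 1) := by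
      symm
      refine Finset.sum_subset (fun m hm => ?_) (fun m hm hm' => ?_)
      · rw [Finset.mem_range]; rw [Finset.mem_Icc] at hm; omega
      · rw [Finset.mem_range] at hm; rw [Finset.mem_Icc] at hm'
        have hlt : m < k + 1 := by omega
        rw [Polynomial.coeff_eq_zero_of_natDegree_lt (by rw [hPdeg m]; omega), mul_zero]
    have h3 : Finset.Icc (k + 1) (n + 1)
        = Finset.map (addRightEmbedding 1) (Finset.Icc k n) := by
      rw [Finset.map_add_right_Icc]
    rw [h1, h2, h3, Finset.sum_map]
    refine Finset.sum_congr rfl (fun m hm => ?_)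
    rw [Finset.mem_Icc] at hm
    simp only [addRightEmbedding_apply]
    rw [hS1c (m + 1) (k + 1) (by omega)]
  -- scaling
  have hscale : ∀ i ≤ n + 1, D.coeff i = l ^ (n + 1 - i) * (P (n + 1)).coeff i := by
    intro i hi
    have key : ∀ x : ℝ, ∑ i ∈ range (n + 2), (D.coeff i * l ^ i) * x ^ i
        = ∑ i ∈ range (n + 2), (l ^ (n + 1) * (P (n + 1)).coeff i) * x ^ i := by
      intro x
      calc ∑ i ∈ range (n + 2), (D.coeff i * l ^ i) * x ^ i
          = ∑ i ∈ range (n + 2), D.coeff i * (l * x) ^ i := by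
            refine Finset.sum_congr rfl (fun i _ => ?_)
            rw [mul_pow]; ring
        _ = D.eval (l * x) := (eval_eq_sum_range' (n := n + 2) (by rw [hDdeg]; omega) (l * x)).symm
        _ = ∏ j ∈ range (n + 1), (l * x - j * l) := hDeval _
        _ = ∏ j ∈ range (n + 1), (l * (x - j)) := by
            refine Finset.prod_congr rfl (fun j _ => by ring)
        _ = l ^ (n + 1) * ∏ j ∈ range (n + 1), (x - j) := by
            rw [Finset.prod_mul_distrib, Finset.prod_const, card_range]
        _ = l ^ (n + 1) * (P (n + 1)).eval x := by rw [hPeval]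
        _ = l ^ (n + 1) * ∑ i ∈ range (n + 2), (P (n + 1)).coeff i * x ^ i := by
            rw [eval_eq_sum_range' (n := n + 2) (by rw [hPdeg]; omega) x]
        _ = ∑ i ∈ range (n + 2), (l ^ (n + 1) * (P (n + 1)).coeff i) * x ^ i := by
            rw [Finset.mul_sum]
            exact Finset.sum_congr rfl (fun i _ => by ring)
    have h := coeff_unique_aux (n + 2) _ _ key i (mem_range.2 (by omega))
    have hli : l ^ (n + 1) = l ^ (n + 1 - i) * l ^ i := by
      rw [← pow_add]; congr 1; omega
    have h' : D.coeff i * l ^ i = (l ^ (n + 1 - i) * (P (n + 1)).coeff i) * l ^ i := by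
      rw [h, hli]; ring
    exact mul_right_cancel₀ (pow_ne_zero i hl) h'
  -- reflection
  have hrefl : Q.coeff k = (-1 : ℝ) ^ (n - k) * (P (n + 1)).coeff (k + 1) := by
    have hins : range (n + 1) = insert 0 (Icc 1 n) := by
      ext j; simp only [Finset.mem_range, Finset.mem_insert, Finset.mem_Icc]; omega
    have key : ∀ x : ℝ,
        ∑ i ∈ range (n + 2), (if i = 0 then (0 : ℝ) else Q.coeff (i - 1)) * x ^ i
        = ∑ i ∈ range (n + 2), ((-1 : ℝ) ^ (n + 1 + i) * (P (n + 1)).coeff i) * x ^ i := by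
      intro x
      have lhs : ∑ i ∈ range (n + 2), (if i = 0 then (0 : ℝ) else Q.coeff (i - 1)) * x ^ i
          = x * Q.eval x := by
        rw [Finset.sum_range_succ']
        rw [eval_eq_sum_range' (n := n + 1) (by rw [hQdeg]; omega) x, Finset.mul_sum]
        norm_num
        exact Finset.sum_congr rfl (fun i _ => by ring)
      have rhs : ∑ i ∈ range (n + 2), ((-1 : ℝ) ^ (n + 1 + i) * (P (n + 1)).coeff i) * x ^ i
          = (-1 : ℝ) ^ (n + 1) * (P (n + 1)).eval (-x) := by
        rw [eval_eq_sum_range' (n := n + 2) (by rw [hPdeg]; omega) (-x), Finset.mul_sum]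
        refine Finset.sum_congr rfl (fun i _ => ?_)
        rw [pow_add, neg_pow x i]
        ring
      rw [lhs, rhs, hQeval, hPeval]
      have hneg : ∏ j ∈ range (n + 1), (-x - (j : ℝ))
          = ∏ j ∈ range (n + 1), (-1 : ℝ) * (x + j) := by
        refine Finset.prod_congr rfl (fun j _ => by ring)
      rw [hneg, Finset.prod_mul_distrib, Finset.prod_const, card_range, hins,
        Finset.prod_insert (by simp), Nat.cast_zero, add_zero, ← mul_assoc, ← pow_add,
        Even.neg_one_pow ⟨n + 1, rfl⟩, one_mul]
    have h := coeff_unique_aux (n + 2) _ _ key (k + 1) (mem_range.2 (by omega))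
    simp only [Nat.add_sub_cancel, Nat.succ_ne_zero, if_false] at h
    rw [h]
    have : (-1 : ℝ) ^ (n + 1 + (k + 1)) = (-1 : ℝ) ^ (n - k) := by
      rw [show n + 1 + (k + 1) = (n - k) + 2 * (k + 1) by omega, pow_add, pow_mul]
      norm_num
    rw [this]
  -- Q coefficients = n! * e
  have hQc : Q.coeff k = (Nat.factorial n : ℝ) * e k := by
    have key : ∀ x : ℝ, ∑ i ∈ range (n + 1), Q.coeff i * x ^ i
        = ∑ i ∈ range (n + 1), ((Nat.factorial n : ℝ) * e i) * x ^ i := by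
      intro x
      rw [← eval_eq_sum_range' (n := n + 1) (by rw [hQdeg]; omega) x, hQeval]
      have hcard : (Icc 1 n).card = n := by rw [Nat.card_Icc]; omega
      calc ∏ j ∈ Icc 1 n, (x + (j : ℝ))
          = ∏ j ∈ Icc 1 n, ((j : ℝ) * (x * (1 / j) + 1)) := by
            refine Finset.prod_congr rfl (fun j hj => ?_)
            have hj1 : 1 ≤ j := (Finset.mem_Icc.1 hj).1
            have : (j : ℝ) ≠ 0 := by positivity
            field_simp
        _ = (∏ j ∈ Icc 1 n, (j : ℝ)) * ∏ j ∈ Icc 1 n, (x * (1 / j) + 1) := by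
            rw [Finset.prod_mul_distrib]
        _ = (Nat.factorial n : ℝ) * ∏ j ∈ Icc 1 n, (x * (1 / j) + 1) := by
            congr 1
            rw [← Nat.cast_prod]
            congr 1
            rw [← Finset.Ico_add_one_right_eq_Icc, Finset.prod_Ico_eq_prod_range,
              ← Finset.prod_range_add_one_eq_factorial]
            exact Finset.prod_congr (by norm_num) (fun i _ => by omega)
        _ = (Nat.factorial n : ℝ)
            * ∑ t ∈ (Icc 1 n).powerset, x ^ t.card * ∏ j ∈ t, (1 / (j : ℝ)) := by
            congr 1
            rw [Finset.prod_add]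
            refine Finset.sum_congr rfl (fun t ht => ?_)
            rw [Finset.prod_const_one, mul_one, Finset.prod_mul_distrib, Finset.prod_const]
        _ = (Nat.factorial n : ℝ) * ∑ i ∈ range (n + 1), x ^ i * e i := by
            congr 1
            rw [Finset.sum_powerset, hcard]
            refine Finset.sum_congr rfl (fun i _ => ?_)
            rw [he, Finset.mul_sum]
            refine Finset.sum_congr rfl (fun t ht => ?_)
            rw [(Finset.mem_powersetCard.1 ht).2]
        _ = ∑ i ∈ range (n + 1), ((Nat.factorial n : ℝ) * e i) * x ^ i := by
            rw [Finset.mul_sum]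
            exact Finset.sum_congr rfl (fun i _ => by ring)
    exact coeff_unique_aux (n + 1) _ _ key k (mem_range.2 (by omega))
  -- assemble
  rw [← hDconv, hscale (k + 1) (by omega), show n + 1 - (k + 1) = n - k by omega]
  have hsq : ((-1 : ℝ) ^ (n - k)) * ((-1 : ℝ) ^ (n - k)) = 1 := by
    rw [← pow_add]
    exact Even.neg_one_pow ⟨n - k, rfl⟩
  calc l ^ (n - k) * (P (n + 1)).coeff (k + 1)
      = (((-1 : ℝ) ^ (n - k)) * ((-1 : ℝ) ^ (n - k)))
          * (l ^ (n - k) * (P (n + 1)).coeff (k + 1)) := by rw [hsq, one_mul]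
    _ = (-1 : ℝ) ^ (n - k) * l ^ (n - k)
          * ((-1 : ℝ) ^ (n - k) * (P (n + 1)).coeff (k + 1)) := by ring
    _ = (-1) ^ (n - k) * l ^ (n - k) * (Nat.factorial n : ℝ) * e k := by
        rw [← hrefl, hQc]; ring


/-- Theorem 3: Let `S₁` satisfy the defining identity of the Stirling numbers
of the first kind and `S₂ₗ` that of the degenerate Stirling numbers of the second kind.
Then for `Y = X 1 + ⋯ + X n` a sum of independent Bernoulli random variables with success
probabilities `1/j`, and `0 ≤ l ≤ n`,
`∑_{m=l}^{n} S₂ₗ(n+1, m+1) S₁(m+1, l+1) = (-1)^{n-l} λ^{n-l} n! E[C(Y,l)]`. -/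
theorem sum_degenerate_stirling2_stirling1_eq_expectation
    {Ω : Type*} [MeasurableSpace Ω] (μ : Measure Ω) [IsProbabilityMeasure μ]
    (l : ℝ) (hl : l ≠ 0)
    (n : ℕ) (hn : 0 < n) (X : ℕ → Ω → ℕ)
    (hmeas : ∀ j, Measurable (X j))
    (hindep : iIndepFun (fun i : Fin n => X (i.1 + 1)) μ)
    (hval : ∀ j ∈ Finset.Icc 1 n, ∀ ω, X j ω = 0 ∨ X j ω = 1)
    (hp1 : ∀ j ∈ Finset.Icc 1 n, μ {ω | X j ω = 1} = ENNReal.ofReal (1 / (j : ℝ)))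
    (hp0 : ∀ j ∈ Finset.Icc 1 n, μ {ω | X j ω = 0} = ENNReal.ofReal (1 - 1 / (j : ℝ)))
    (S₁ : ℕ → ℕ → ℝ)
    (hS₁ : ∀ (m : ℕ) (x : ℝ),
      ∏ k ∈ Finset.range m, (x - k) = ∑ i ∈ Finset.range (m + 1), S₁ m i * x ^ i)
    (S₂ : ℕ → ℕ → ℝ)
    (hS₂ : ∀ (m : ℕ) (x : ℝ),
      ∏ k ∈ Finset.range m, (x - k * l)
        = ∑ i ∈ Finset.range (m + 1), S₂ m i * ∏ k ∈ Finset.range i, (x - k)) :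
    ∀ k : ℕ, k ≤ n →
      ∑ m ∈ Finset.Icc k n, S₂ (n + 1) (m + 1) * S₁ (m + 1) (k + 1)
        = (-1) ^ (n - k) * l ^ (n - k) * (Nat.factorial n : ℝ)
            * ∫ ω, ((∑ j ∈ Finset.Icc 1 n, X j ω).choose k : ℝ) ∂μ := by
  intro k hk
  rw [expectation_choose_eq μ n X hmeas hindep hval hp1 k
    (fun ω => choose_sum_eq _ _ (fun j hj => hval j hj ω) k)]
  exact algebra_main l hl n S₁ hS₁ S₂ hS₂ k hk
end

section
/- Let α > 0 and λ ∈ (0,1) be real numbers and let n be a positive integer. Let (X_j)_{1≤j≤n} be independent Bernoulli random variables with P{X_j = 1} = 1/j, and set Y_n = X_1 + ⋯ + X_n. Let (X_{j,λ}(α))_{1≤j≤n} be independent Bernoulli random variables with P{X_{j,λ}(α) = 1} = α/(α + λj), and set Z_{n,λ}(α) = X_{1,λ}(α) + ⋯ + X_{n,λ}(α). Then for every integer l with 0 ≤ l ≤ n, (α/λ)^l E[binom(Y_n, l)] = (Π_{j=1}^{n} (1 + α/(λj))) · (1/(2π)) ∫_{-π}^{π} E[e^{iθ(Z_{n,λ}(α)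 - l)}] dθ, where i = √(-1). -/
open MeasureTheory ProbabilityTheory Finset Complex

lemma sum_Icc_one_eq_fin {M : Type*} [AddCommMonoid M] (n : ℕ) (f : ℕ → M) :
    ∑ j ∈ Finset.Icc 1 n, f j = ∑ i : Fin n, f (i.1 + 1) := by
  rw [← Finset.Ico_add_one_right_eq_Icc, Finset.sum_Ico_eq_sum_range, ← Fin.sum_univ_eq_sum_range]
  simp [add_comm]

lemma prod_Icc_one_eq_fin {M : Type*} [CommMonoid M] (n : ℕ) (f : ℕ → M) :
    ∏ j ∈ Finset.Icc 1 n, f j = ∏ i : Fin n, f (i.1 + 1) := by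
  rw [← Finset.Ico_add_one_right_eq_Icc, Finset.prod_Ico_eq_prod_range, ← Fin.prod_univ_eq_prod_range]
  simp [add_comm]

/-- combinatorial identity: choose of a 0/1 sum is the elementary symmetric sum. -/
lemma choose_sum_eq_esymm {ι : Type*} [Fintype ι] [DecidableEq ι] (x : ι → ℕ)
    (h : ∀ i, x i = 0 ∨ x i = 1) (k : ℕ) :
    (∑ i, x i).choose k
      = ∑ S ∈ Finset.powersetCard k (Finset.univ : Finset ι), ∏ i ∈ S, x i := by
  classical
  set T := Finset.univ.filter (fun i => x i = 1) with hT
  have hsum : ∑ i, x i = T.card := by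
    rw [← Finset.sum_filter_add_sum_filter_not Finset.univ (fun i => x i = 1)]
    have h1 : ∑ i ∈ Finset.univ.filter (fun i => x i = 1), x i = T.card := by
      rw [Finset.card_eq_sum_ones]
      exact Finset.sum_congr rfl fun i hi => (Finset.mem_filter.mp hi).2
    have h2 : ∑ i ∈ Finset.univ.filter (fun i => ¬ x i = 1), x i = 0 := by
      refine Finset.sum_eq_zero fun i hi => ?_
      rcases h i with h0 | h1
      · exact h0
      · exact absurd h1 (Finset.mem_filter.mp hi).2
    rw [h1, h2]
    omega
  have hprod : ∀ S : Finset ι, ∏ i ∈ S, x i = if S ⊆ T then 1 else 0 := by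
    intro S
    by_cases hST : S ⊆ T
    · rw [if_pos hST]
      exact Finset.prod_eq_one fun i hi => (Finset.mem_filter.mp (hST hi)).2
    · rw [if_neg hST]
      obtain ⟨i, hiS, hiT⟩ := Finset.not_subset.mp hST
      refine Finset.prod_eq_zero hiS ?_
      rcases h i with h0 | h1
      · exact h0
      · exact absurd (Finset.mem_filter.mpr ⟨Finset.mem_univ i, h1⟩) hiT
  have : ∑ S ∈ Finset.powersetCard k (Finset.univ : Finset ι), ∏ i ∈ S, x i
      = ((Finset.powersetCard k (Finset.univ : Finset ι)).filter (fun S => S ⊆ T)).card := by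
    rw [Finset.card_eq_sum_ones, Finset.sum_filter]
    exact Finset.sum_congr rfl fun S _ => hprod S
  rw [this, hsum]
  have hfe : (Finset.powersetCard k (Finset.univ : Finset ι)).filter (fun S => S ⊆ T)
      = Finset.powersetCard k T := by
    ext S
    simp only [Finset.mem_filter, Finset.mem_powersetCard]
    exact ⟨fun ⟨⟨_, hc⟩, hs⟩ => ⟨hs, hc⟩, fun ⟨hs, hc⟩ => ⟨⟨Finset.subset_univ S, hc⟩, hs⟩⟩
  rw [hfe, Finset.card_powersetCard]

/-- complex version of `IndepFun.integral_mul`. -/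
lemma ProbabilityTheory.IndepFun.integral_mul_complex {Ω : Type*} [MeasurableSpace Ω] {μ : Measure Ω}
    {f g : Ω → ℂ} (h : IndepFun f g μ) (hfi : Integrable f μ) (hgi : Integrable g μ) :
    ∫ ω, f ω * g ω ∂μ = (∫ ω, f ω ∂μ) * ∫ ω, g ω ∂μ := by
  have hfg : Integrable (fun ω => f ω * g ω) μ := h.integrable_mul hfi hgi
  have hmre : Measurable (Complex.re) := Complex.measurable_re
  have hmim : Measurable (Complex.im) := Complex.measurable_im
  have huu : IndepFun (fun ω => (f ω).re) (fun ω => (g ω).re) μ := h.comp hmre hmre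
  have huv : IndepFun (fun ω => (f ω).re) (fun ω => (g ω).im) μ := h.comp hmre hmim
  have hvu : IndepFun (fun ω => (f ω).im) (fun ω => (g ω).re) μ := h.comp hmim hmre
  have hvv : IndepFun (fun ω => (f ω).im) (fun ω => (g ω).im) μ := h.comp hmim hmim
  have hfr : Integrable (fun ω => (f ω).re) μ := hfi.re
  have hfim : Integrable (fun ω => (f ω).im) μ := hfi.im
  have hgr : Integrable (fun ω => (g ω).re) μ := hgi.re
  have hgim : Integrable (fun ω => (g ω).im) μ := hgi.im
  have e1 : ∫ ω, (f ω).re * (g ω).re ∂μ = (∫ ω, (f ω).re ∂μ) * ∫ ω, (g ω).re ∂μ :=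
    huu.integral_fun_mul_eq_mul_integral hfr.aestronglyMeasurable hgr.aestronglyMeasurable
  have e2 : ∫ ω, (f ω).re * (g ω).im ∂μ = (∫ ω, (f ω).re ∂μ) * ∫ ω, (g ω).im ∂μ :=
    huv.integral_fun_mul_eq_mul_integral hfr.aestronglyMeasurable hgim.aestronglyMeasurable
  have e3 : ∫ ω, (f ω).im * (g ω).re ∂μ = (∫ ω, (f ω).im ∂μ) * ∫ ω, (g ω).re ∂μ :=
    hvu.integral_fun_mul_eq_mul_integral hfim.aestronglyMeasurable hgr.aestronglyMeasurable
  have e4 : ∫ ω, (f ω).im * (g ω).im ∂μ = (∫ ω, (f ω).im ∂μ) * ∫ ω, (g ω).im ∂μ :=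
    hvv.integral_fun_mul_eq_mul_integral hfim.aestronglyMeasurable hgim.aestronglyMeasurable
  have hre : ∀ {F : Ω → ℂ}, Integrable F μ → ∫ ω, (F ω).re ∂μ = (∫ ω, F ω ∂μ).re := by
    intro F hF
    simpa using integral_re (𝕜 := ℂ) hF
  have him : ∀ {F : Ω → ℂ}, Integrable F μ → ∫ ω, (F ω).im ∂μ = (∫ ω, F ω ∂μ).im := by
    intro F hF
    simpa using integral_im (𝕜 := ℂ) hF
  have i1 : Integrable (fun ω => (f ω).re * (g ω).re) μ := huu.integrable_mul hfr hgr
  have i2 : Integrable (fun ω => (f ω).re * (g ω).im) μ := huv.integrable_mul hfr hgim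
  have i3 : Integrable (fun ω => (f ω).im * (g ω).re) μ := hvu.integrable_mul hfim hgr
  have i4 : Integrable (fun ω => (f ω).im * (g ω).im) μ := hvv.integrable_mul hfim hgim
  apply Complex.ext
  · have h1 : ∫ ω, ((f ω * g ω).re) ∂μ
        = ∫ ω, ((f ω).re * (g ω).re - (f ω).im * (g ω).im) ∂μ :=
      integral_congr_ae (Filter.Eventually.of_forall fun ω => by simp [Complex.mul_re])
    rw [← hre hfg, h1, integral_sub i1 i4,
      e1, e4, Complex.mul_re, ← hre hfi, ← hre hgi, ← him hfi, ← him hgi]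
  · have h1 : ∫ ω, ((f ω * g ω).im) ∂μ
        = ∫ ω, ((f ω).re * (g ω).im + (f ω).im * (g ω).re) ∂μ :=
      integral_congr_ae (Filter.Eventually.of_forall fun ω => by simp [Complex.mul_im])
    rw [← him hfg, h1, integral_add i2 i3,
      e2, e3, Complex.mul_im, ← hre hfi, ← hre hgi, ← him hfi, ← him hgi]

lemma integrable_prod_bdd {Ω ι : Type*} [MeasurableSpace Ω] {μ : Measure Ω}
    [IsProbabilityMeasure μ] {g : ι → Ω → ℂ} (hmeas : ∀ i, Measurable (g i))
    (hbdd : ∀ i ω, ‖g i ω‖ ≤ 1) (s : Finset ι) :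
    Integrable (fun ω => ∏ i ∈ s, g i ω) μ := by
  refine (integrable_const (1 : ℝ)).mono' ?_ (Filter.Eventually.of_forall fun ω => ?_)
  · exact (Finset.measurable_prod s fun i _ => hmeas i).aestronglyMeasurable
  · calc ‖∏ i ∈ s, g i ω‖ ≤ ∏ i ∈ s, ‖g i ω‖ := norm_prod_le _ _
      _ ≤ 1 := Finset.prod_le_one (fun i _ => norm_nonneg _) (fun i _ => hbdd i ω)

lemma integral_finset_prod_indep {Ω ι : Type*} [MeasurableSpace Ω] {μ : Measure Ω}
    [IsProbabilityMeasure μ] {g : ι → Ω → ℂ} (hmeas : ∀ i, Measurable (g i))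
    (hbdd : ∀ i ω, ‖g i ω‖ ≤ 1)
    (hind : iIndepFun g μ) (s : Finset ι) :
    ∫ ω, ∏ i ∈ s, g i ω ∂μ = ∏ i ∈ s, ∫ ω, g i ω ∂μ := by
  classical
  induction s using Finset.cons_induction with
  | empty => simp
  | cons a s ha ih =>
    have hI : IndepFun (∏ j ∈ s, g j) (g a) μ :=
      hind.indepFun_finsetProd_of_notMem hmeas ha
    have hfe : (∏ j ∈ s, g j) = fun ω => ∏ j ∈ s, g j ω := funext fun ω => Finset.prod_apply ω s g
    rw [hfe] at hI
    have key : ∫ ω, (∏ i ∈ s, g i ω) * g a ω ∂μ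
        = (∫ ω, ∏ i ∈ s, g i ω ∂μ) * ∫ ω, g a ω ∂μ := by
      have := ProbabilityTheory.IndepFun.integral_mul_complex hI (integrable_prod_bdd hmeas hbdd s)
        ((integrable_const (1 : ℝ)).mono' (hmeas a).aestronglyMeasurable
          (Filter.Eventually.of_forall fun ω => hbdd a ω))
      simpa using this
    rw [Finset.prod_cons]
    have : ∫ ω, ∏ i ∈ Finset.cons a s ha, g i ω ∂μ
        = ∫ ω, (∏ i ∈ s, g i ω) * g a ω ∂μ := by
      congr 1
      ext ω
      rw [Finset.prod_cons, mul_comm]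
    rw [this, key, ih, mul_comm]

/-- expectation of a function of a {0,1}-valued random variable. -/
lemma integral_binary {Ω : Type*} [MeasurableSpace Ω] (μ : Measure Ω) [IsProbabilityMeasure μ]
    (W : Ω → ℕ) (hW : Measurable W) (hval : ∀ ω, W ω = 0 ∨ W ω = 1)
    (p : ℝ) (hp : 0 ≤ p) (hμ : μ {ω | W ω = 1} = ENNReal.ofReal p) (f : ℕ → ℂ) :
    ∫ ω, f (W ω) ∂μ = f 0 + (p : ℂ) * (f 1 - f 0) := by
  have hA : MeasurableSet {ω | W ω = 1} := hW (measurableSet_singleton 1)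
  have heq : ∀ ω, f (W ω)
      = f 0 + Set.indicator {ω | W ω = 1} (fun _ => f 1 - f 0) ω := by
    intro ω
    rcases hval ω with h0 | h1
    · rw [h0, Set.indicator_of_notMem (by simp [Set.mem_setOf_eq, h0]), add_zero]
    · rw [h1, Set.indicator_of_mem (by simpa [Set.mem_setOf_eq] using h1)]
      ring
  calc ∫ ω, f (W ω) ∂μ
      = ∫ ω, (f 0 + Set.indicator {ω | W ω = 1} (fun _ => f 1 - f 0) ω) ∂μ := by
        exact integral_congr_ae (Filter.Eventually.of_forall heq)
    _ = f 0 + (p : ℂ) * (f 1 - f 0) := by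
        rw [integral_add (integrable_const _) ((integrable_const _).indicator hA),
          integral_const, integral_indicator_const _ hA, measureReal_def μ {ω | W ω = 1}, hμ, ENNReal.toReal_ofReal hp]
        simp [Complex.real_smul]

lemma ofReal_integral' {Ω : Type*} [MeasurableSpace Ω] (μ : Measure Ω) (f : Ω → ℝ) :
    ((∫ ω, f ω ∂μ : ℝ) : ℂ) = ∫ ω, (f ω : ℂ) ∂μ := (integral_ofReal (𝕜 := ℂ)).symm

/-- Fourier orthogonality on `[-π, π]`. -/
lemma integral_exp_int_mul (m : ℤ) :
    ∫ θ in (-Real.pi)..Real.pi, Complex.exp (Complex.I * m * θ)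
      = if m = 0 then (2 * Real.pi : ℂ) else 0 := by
  by_cases hm : m = 0
  · subst hm
    simp only [Int.cast_zero, mul_zero, zero_mul, Complex.exp_zero, if_pos]
    rw [intervalIntegral.integral_const]
    simp [Complex.real_smul]
    ring
  · rw [if_neg hm]
    have hc : (Complex.I * m : ℂ) ≠ 0 := by
      simp [Complex.I_ne_zero, Complex.ext_iff, hm]
    have : ∀ θ : ℝ, Complex.exp (Complex.I * m * θ) = Complex.exp ((Complex.I * m) * θ) := by
      intro θ; ring_nf
    rw [intervalIntegral.integral_congr (fun θ _ => this θ), integral_exp_mul_complex hc]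
    have key : Complex.exp ((Complex.I * m) * Real.pi)
        = Complex.exp ((Complex.I * m) * (-Real.pi : ℝ)) := by
      have : ((Complex.I * m) * (Real.pi : ℂ))
          = ((Complex.I * m) * ((-Real.pi : ℝ) : ℂ)) + m * (2 * Real.pi * Complex.I) := by
        push_cast
        ring
      rw [this, Complex.exp_add, Complex.exp_int_mul_two_pi_mul_I, mul_one]
    rw [key, sub_self, zero_div]

/-- With `Y = X 1 + ⋯ + X n` a sum of independent Bernoulli random variables
with success probabilities `1/j`, and `Z = X' 1 + ⋯ + X' n` a sum of independent Bernoulli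
random variables with success probabilities `α/(α + λj)`, for every `0 ≤ l ≤ n`,
`(α/λ)^l E[C(Y,l)] = (∏_{j=1}^n (1 + α/(λj))) (1/(2π)) ∫_{-π}^{π} E[e^{iθ(Z - l)}] dθ`. -/
theorem expectation_choose_eq_integral_char
    {Ω₁ : Type*} [MeasurableSpace Ω₁] (μ₁ : Measure Ω₁) [IsProbabilityMeasure μ₁]
    {Ω₂ : Type*} [MeasurableSpace Ω₂] (μ₂ : Measure Ω₂) [IsProbabilityMeasure μ₂]
    (α l : ℝ) (hα : 0 < α) (hl : l ∈ Set.Ioo (0 : ℝ) 1)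
    (n : ℕ) (hn : 0 < n)
    (X : ℕ → Ω₁ → ℕ)
    (hXmeas : ∀ j, Measurable (X j))
    (hXindep : iIndepFun (fun i : Fin n => X (i.1 + 1)) μ₁)
    (hXval : ∀ j ∈ Finset.Icc 1 n, ∀ ω, X j ω = 0 ∨ X j ω = 1)
    (hXp1 : ∀ j ∈ Finset.Icc 1 n, μ₁ {ω | X j ω = 1} = ENNReal.ofReal (1 / (j : ℝ)))
    (hXp0 : ∀ j ∈ Finset.Icc 1 n, μ₁ {ω | X j ω = 0} = ENNReal.ofReal (1 - 1 / (j : ℝ)))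
    (X' : ℕ → Ω₂ → ℕ)
    (hX'meas : ∀ j, Measurable (X' j))
    (hX'indep : iIndepFun (fun i : Fin n => X' (i.1 + 1)) μ₂)
    (hX'val : ∀ j ∈ Finset.Icc 1 n, ∀ ω, X' j ω = 0 ∨ X' j ω = 1)
    (hX'p1 : ∀ j ∈ Finset.Icc 1 n,
      μ₂ {ω | X' j ω = 1} = ENNReal.ofReal (α / (α + l * j)))
    (hX'p0 : ∀ j ∈ Finset.Icc 1 n,
      μ₂ {ω | X' j ω = 0} = ENNReal.ofReal (1 - α / (α + l * j))) :
    ∀ k : ℕ, k ≤ n →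
      ((((α / l) ^ k
            * ∫ ω, ((∑ j ∈ Finset.Icc 1 n, X j ω).choose k : ℝ) ∂μ₁ : ℝ)) : ℂ)
        = ((∏ j ∈ Finset.Icc 1 n, (1 + α / (l * j)) : ℝ) : ℂ)
            * ((1 / (2 * Real.pi) : ℂ)
                * ∫ θ in (-Real.pi)..Real.pi,
                    ∫ ω, Complex.exp
                      (Complex.I * θ
                        * (((∑ j ∈ Finset.Icc 1 n, X' j ω : ℕ) : ℂ) - k)) ∂μ₂) := by
  classical
  intro k hk
  have hl0 : (0 : ℝ) < l := hl.1
  have hmem : ∀ i : Fin n, i.1 + 1 ∈ Finset.Icc 1 n := fun i =>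
    Finset.mem_Icc.mpr ⟨Nat.le_add_left 1 i.1, i.isLt⟩
  have hjpos : ∀ i : Fin n, (0 : ℝ) < ((i.1 + 1 : ℕ) : ℝ) := fun i => by positivity
  have hden : ∀ i : Fin n, (0 : ℝ) < α + l * ((i.1 + 1 : ℕ) : ℝ) := fun i => by
    have := hjpos i; positivity
  -- abbreviations
  set p : Fin n → ℝ := fun i => 1 / ((i.1 + 1 : ℕ) : ℝ) with hp
  set q : Fin n → ℝ := fun i => α / (α + l * ((i.1 + 1 : ℕ) : ℝ)) with hq
  have hqnn : ∀ i : Fin n, 0 ≤ q i := fun i => le_of_lt (div_pos hα (hden i))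
  ----------------------------------------------------------------
  -- LHS
  ----------------------------------------------------------------
  set g1 : Fin n → Ω₁ → ℂ := fun i ω => ((X (i.1 + 1) ω : ℕ) : ℂ) with hg1
  have hg1meas : ∀ i, Measurable (g1 i) := fun i => measurable_from_top.comp (hXmeas _)
  have hg1bdd : ∀ i ω, ‖g1 i ω‖ ≤ 1 := by
    intro i ω
    rcases hXval _ (hmem i) ω with h | h <;> simp [hg1, h]
  have hg1ind : iIndepFun g1 μ₁ :=
    hXindep.comp (fun _ => (Nat.cast : ℕ → ℂ)) (fun _ => measurable_from_top)
  have hE1 : ∀ i : Fin n, ∫ ω, g1 i ω ∂μ₁ = ((p i : ℝ) : ℂ) := by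
    intro i
    have := integral_binary μ₁ (X (i.1 + 1)) (hXmeas _) (hXval _ (hmem i)) (p i)
      (by positivity) (by simpa [hp] using hXp1 _ (hmem i)) (fun m => ((m : ℕ) : ℂ))
    simpa [hg1] using this
  have hLHS : ((((α / l) ^ k
        * ∫ ω, ((∑ j ∈ Finset.Icc 1 n, X j ω).choose k : ℝ) ∂μ₁ : ℝ)) : ℂ)
      = ((α / l : ℝ) : ℂ) ^ k * ∑ S ∈ Finset.powersetCard k (Finset.univ : Finset (Fin n)),
          ∏ i ∈ S, ((p i : ℝ) : ℂ) := by
    have hint : ∀ ω, ((((∑ j ∈ Finset.Icc 1 n, X j ω).choose k : ℝ)) : ℂ)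
        = ∑ S ∈ Finset.powersetCard k (Finset.univ : Finset (Fin n)), ∏ i ∈ S, g1 i ω := by
      intro ω
      have h1 : (∑ j ∈ Finset.Icc 1 n, X j ω) = ∑ i : Fin n, X (i.1 + 1) ω :=
        sum_Icc_one_eq_fin n (fun j => X j ω)
      have h2 := choose_sum_eq_esymm (fun i : Fin n => X (i.1 + 1) ω)
        (fun i => hXval _ (hmem i) ω) k
      rw [h1, h2]
      push_cast
      rfl
    calc ((((α / l) ^ k
        * ∫ ω, ((∑ j ∈ Finset.Icc 1 n, X j ω).choose k : ℝ) ∂μ₁ : ℝ)) : ℂ)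
        = ((α / l : ℝ) : ℂ) ^ k * ∫ ω, ((((∑ j ∈ Finset.Icc 1 n, X j ω).choose k : ℝ)) : ℂ) ∂μ₁ := by
          rw [Complex.ofReal_mul, Complex.ofReal_pow, ofReal_integral']
      _ = ((α / l : ℝ) : ℂ) ^ k * ∫ ω, ∑ S ∈ Finset.powersetCard k (Finset.univ : Finset (Fin n)),
            ∏ i ∈ S, g1 i ω ∂μ₁ := by
          congr 1
          exact integral_congr_ae (Filter.Eventually.of_forall hint)
      _ = ((α / l : ℝ) : ℂ) ^ k * ∑ S ∈ Finset.powersetCard k (Finset.univ : Finset (Fin n)),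
            ∫ ω, ∏ i ∈ S, g1 i ω ∂μ₁ := by
          rw [integral_finset_sum _ (fun S _ => integrable_prod_bdd hg1meas hg1bdd S)]
      _ = ((α / l : ℝ) : ℂ) ^ k * ∑ S ∈ Finset.powersetCard k (Finset.univ : Finset (Fin n)),
            ∏ i ∈ S, ((p i : ℝ) : ℂ) := by
          congr 1
          refine Finset.sum_congr rfl fun S _ => ?_
          rw [integral_finset_prod_indep hg1meas hg1bdd hg1ind S]
          exact Finset.prod_congr rfl fun i _ => hE1 i
  ----------------------------------------------------------------
  -- RHS inner integral
  ----------------------------------------------------------------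
  have hinner : ∀ θ : ℝ,
      (∫ ω, Complex.exp (Complex.I * θ
          * (((∑ j ∈ Finset.Icc 1 n, X' j ω : ℕ) : ℂ) - k)) ∂μ₂)
      = ∑ t ∈ (Finset.univ : Finset (Fin n)).powerset,
          ((∏ i ∈ t, ((q i : ℝ) : ℂ)) * ∏ i ∈ Finset.univ \ t, (1 - ((q i : ℝ) : ℂ)))
            * Complex.exp (Complex.I * (((t.card : ℤ) - (k : ℤ) : ℤ) : ℂ) * θ) := by
    intro θ
    set g2 : Fin n → Ω₂ → ℂ := fun i ω => Complex.exp (Complex.I * θ * ((X' (i.1 + 1) ω : ℕ) : ℂ))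
      with hg2
    have hg2meas : ∀ i, Measurable (g2 i) := by
      intro i
      exact Complex.measurable_exp.comp
        ((measurable_from_top.comp (hX'meas (i.1 + 1))).const_mul (Complex.I * θ))
    have hg2bdd : ∀ i ω, ‖g2 i ω‖ ≤ 1 := fun i ω => by
      simp [hg2, Complex.norm_exp]
    have hg2ind : iIndepFun g2 μ₂ :=
      hX'indep.comp (fun _ => fun m : ℕ => Complex.exp (Complex.I * θ * (m : ℂ)))
        (fun _ => measurable_from_top)
    have hE2 : ∀ i : Fin n, ∫ ω, g2 i ω ∂μ₂
        = ((q i : ℝ) : ℂ) * Complex.exp (Complex.I * θ) + (1 - ((q i : ℝ) : ℂ)) := by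
      intro i
      have := integral_binary μ₂ (X' (i.1 + 1)) (hX'meas _) (hX'val _ (hmem i)) (q i)
        (hqnn i) (by simpa [hq] using hX'p1 _ (hmem i))
        (fun m => Complex.exp (Complex.I * θ * (m : ℂ)))
      simp only [Nat.cast_zero, mul_zero, Complex.exp_zero, Nat.cast_one, mul_one] at this
      rw [hg2]
      rw [this]
      ring
    have hpoint : ∀ ω, Complex.exp (Complex.I * θ
          * (((∑ j ∈ Finset.Icc 1 n, X' j ω : ℕ) : ℂ) - k))
        = Complex.exp (-(Complex.I * θ * k)) * ∏ i : Fin n, g2 i ω := by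
      intro ω
      have hsum : ((∑ j ∈ Finset.Icc 1 n, X' j ω : ℕ) : ℂ)
          = ∑ i : Fin n, ((X' (i.1 + 1) ω : ℕ) : ℂ) := by
        rw [sum_Icc_one_eq_fin n (fun j => X' j ω)]
        push_cast
        rfl
      rw [hsum, ← Complex.exp_sum]
      rw [← Complex.exp_add]
      congr 1
      rw [mul_sub, Finset.mul_sum]
      ring
    calc (∫ ω, Complex.exp (Complex.I * θ
          * (((∑ j ∈ Finset.Icc 1 n, X' j ω : ℕ) : ℂ) - k)) ∂μ₂)
        = ∫ ω, Complex.exp (-(Complex.I * θ * k)) * ∏ i : Fin n, g2 i ω ∂μ₂ :=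
          integral_congr_ae (Filter.Eventually.of_forall hpoint)
      _ = Complex.exp (-(Complex.I * θ * k)) * ∫ ω, ∏ i : Fin n, g2 i ω ∂μ₂ :=
          integral_const_mul _ _
      _ = Complex.exp (-(Complex.I * θ * k)) * ∏ i : Fin n, ∫ ω, g2 i ω ∂μ₂ := by
          rw [integral_finset_prod_indep hg2meas hg2bdd hg2ind]
      _ = Complex.exp (-(Complex.I * θ * k)) * ∏ i : Fin n,
            (((q i : ℝ) : ℂ) * Complex.exp (Complex.I * θ) + (1 - ((q i : ℝ) : ℂ))) := by
          rw [Finset.prod_congr rfl fun i _ => hE2 i]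
      _ = Complex.exp (-(Complex.I * θ * k)) * ∑ t ∈ (Finset.univ : Finset (Fin n)).powerset,
            (∏ i ∈ t, ((q i : ℝ) : ℂ) * Complex.exp (Complex.I * θ))
              * ∏ i ∈ Finset.univ \ t, (1 - ((q i : ℝ) : ℂ)) := by
          rw [Finset.prod_add]
      _ = ∑ t ∈ (Finset.univ : Finset (Fin n)).powerset,
          ((∏ i ∈ t, ((q i : ℝ) : ℂ)) * ∏ i ∈ Finset.univ \ t, (1 - ((q i : ℝ) : ℂ)))
            * Complex.exp (Complex.I * (((t.card : ℤ) - (k : ℤ) : ℤ) : ℂ) * θ) := by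
          rw [Finset.mul_sum]
          refine Finset.sum_congr rfl fun t _ => ?_
          rw [Finset.prod_mul_distrib, Finset.prod_const]
          have hexp : Complex.exp (-(Complex.I * θ * k)) * Complex.exp (Complex.I * θ) ^ t.card
              = Complex.exp (Complex.I * (((t.card : ℤ) - (k : ℤ) : ℤ) : ℂ) * θ) := by
            rw [← Complex.exp_nat_mul, ← Complex.exp_add]
            congr 1
            push_cast
            ring
          rw [← hexp]
          ring
  ----------------------------------------------------------------
  -- RHS outer integral
  ----------------------------------------------------------------
  have houter : (∫ θ in (-Real.pi)..Real.pi,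
        ∫ ω, Complex.exp (Complex.I * θ
          * (((∑ j ∈ Finset.Icc 1 n, X' j ω : ℕ) : ℂ) - k)) ∂μ₂)
      = (2 * Real.pi : ℂ) * ∑ S ∈ Finset.powersetCard k (Finset.univ : Finset (Fin n)),
          ((∏ i ∈ S, ((q i : ℝ) : ℂ)) * ∏ i ∈ Finset.univ \ S, (1 - ((q i : ℝ) : ℂ))) := by
    have hconts : ∀ t : Finset (Fin n), Continuous (fun θ : ℝ =>
        ((∏ i ∈ t, ((q i : ℝ) : ℂ)) * ∏ i ∈ Finset.univ \ t, (1 - ((q i : ℝ) : ℂ)))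
          * Complex.exp (Complex.I * (((t.card : ℤ) - (k : ℤ) : ℤ) : ℂ) * θ)) := by
      intro t
      exact continuous_const.mul (Complex.continuous_exp.comp
        (continuous_const.mul Complex.continuous_ofReal))
    calc (∫ θ in (-Real.pi)..Real.pi,
        ∫ ω, Complex.exp (Complex.I * θ
          * (((∑ j ∈ Finset.Icc 1 n, X' j ω : ℕ) : ℂ) - k)) ∂μ₂)
        = ∫ θ in (-Real.pi)..Real.pi, ∑ t ∈ (Finset.univ : Finset (Fin n)).powerset,
            ((∏ i ∈ t, ((q i : ℝ) : ℂ)) * ∏ i ∈ Finset.univ \ t, (1 - ((q i : ℝ) : ℂ)))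
              * Complex.exp (Complex.I * (((t.card : ℤ) - (k : ℤ) : ℤ) : ℂ) * θ) :=
          intervalIntegral.integral_congr (fun θ _ => hinner θ)
      _ = ∑ t ∈ (Finset.univ : Finset (Fin n)).powerset,
            ∫ θ in (-Real.pi)..Real.pi,
            ((∏ i ∈ t, ((q i : ℝ) : ℂ)) * ∏ i ∈ Finset.univ \ t, (1 - ((q i : ℝ) : ℂ)))
              * Complex.exp (Complex.I * (((t.card : ℤ) - (k : ℤ) : ℤ) : ℂ) * θ) :=
          intervalIntegral.integral_finset_sum
            (fun t _ => (hconts t).intervalIntegrable _ _)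
      _ = ∑ t ∈ (Finset.univ : Finset (Fin n)).powerset,
            ((∏ i ∈ t, ((q i : ℝ) : ℂ)) * ∏ i ∈ Finset.univ \ t, (1 - ((q i : ℝ) : ℂ)))
              * (if ((t.card : ℤ) - (k : ℤ) : ℤ) = 0 then (2 * Real.pi : ℂ) else 0) := by
          refine Finset.sum_congr rfl fun t _ => ?_
          rw [intervalIntegral.integral_const_mul, integral_exp_int_mul]
      _ = (2 * Real.pi : ℂ) * ∑ S ∈ Finset.powersetCard k (Finset.univ : Finset (Fin n)),
          ((∏ i ∈ S, ((q i : ℝ) : ℂ)) * ∏ i ∈ Finset.univ \ S, (1 - ((q i : ℝ) : ℂ))) := by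
          rw [Finset.mul_sum, Finset.powersetCard_eq_filter, Finset.sum_filter]
          refine Finset.sum_congr rfl fun t _ => ?_
          have hiff : (((t.card : ℤ) - (k : ℤ) : ℤ) = 0) ↔ (t.card = k) := by
            omega
          by_cases hc : t.card = k
          · rw [if_pos hc, if_pos (hiff.mpr hc)]; ring
          · rw [if_neg hc, if_neg (fun h => hc (hiff.mp h))]; ring
  ----------------------------------------------------------------
  -- Final algebra
  ----------------------------------------------------------------
  rw [hLHS, houter]
  have hpi : (2 * Real.pi : ℂ) ≠ 0 := by
    simp [Complex.ext_iff, Real.pi_ne_zero]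
  rw [← mul_assoc ((1 : ℂ) / (2 * Real.pi)), one_div, inv_mul_cancel₀ hpi, one_mul]
  -- reduce to a real identity
  have hreal : (α / l) ^ k * ∑ S ∈ Finset.powersetCard k (Finset.univ : Finset (Fin n)),
        ∏ i ∈ S, p i
      = (∏ j ∈ Finset.Icc 1 n, (1 + α / (l * j)))
        * ∑ S ∈ Finset.powersetCard k (Finset.univ : Finset (Fin n)),
          ((∏ i ∈ S, q i) * ∏ i ∈ Finset.univ \ S, (1 - q i)) := by
    rw [prod_Icc_one_eq_fin n (fun j => 1 + α / (l * (j : ℝ)))]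
    rw [Finset.mul_sum, Finset.mul_sum]
    refine Finset.sum_congr rfl fun S hS => ?_
    have hScard : S.card = k := (Finset.mem_powersetCard.mp hS).2
    set r : Fin n → ℝ := fun i => 1 + α / (l * ((i.1 + 1 : ℕ) : ℝ)) with hr
    have fact1 : ∀ i : Fin n, r i * q i = (α / l) * p i := by
      intro i
      have h1 := hjpos i
      have h2 := hden i
      rw [hr, hq, hp]
      field_simp
      ring
    have fact2 : ∀ i : Fin n, r i * (1 - q i) = 1 := by
      intro i
      have h1 := hjpos i
      have h2 := hden i
      rw [hr, hq]
      field_simp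
      ring
    calc (α / l) ^ k * ∏ i ∈ S, p i
        = ∏ i ∈ S, ((α / l) * p i) := by
          rw [Finset.prod_mul_distrib, Finset.prod_const, hScard]
      _ = (∏ i ∈ S, (r i * q i)) * ∏ i ∈ Finset.univ \ S, (r i * (1 - q i)) := by
          rw [Finset.prod_congr rfl fun i _ => fact1 i,
            Finset.prod_congr rfl (fun i _ => fact2 i), Finset.prod_const_one, mul_one]
      _ = (∏ i : Fin n, r i) * ((∏ i ∈ S, q i) * ∏ i ∈ Finset.univ \ S, (1 - q i)) := by
          rw [← Finset.prod_sdiff (Finset.subset_univ S), Finset.prod_mul_distrib,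
            Finset.prod_mul_distrib]
          ring
  calc ((α / l : ℝ) : ℂ) ^ k * ∑ S ∈ Finset.powersetCard k (Finset.univ : Finset (Fin n)),
        ∏ i ∈ S, ((p i : ℝ) : ℂ)
      = (((α / l) ^ k * ∑ S ∈ Finset.powersetCard k (Finset.univ : Finset (Fin n)),
          ∏ i ∈ S, p i : ℝ) : ℂ) := by
        push_cast
        ring
    _ = (((∏ j ∈ Finset.Icc 1 n, (1 + α / (l * j)))
        * ∑ S ∈ Finset.powersetCard k (Finset.univ : Finset (Fin n)),
          ((∏ i ∈ S, q i) * ∏ i ∈ Finset.univ \ S, (1 - q i)) : ℝ) : ℂ) := by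
        rw [hreal]
    _ = ((∏ j ∈ Finset.Icc 1 n, (1 + α / (l * j)) : ℝ) : ℂ)
        * ∑ S ∈ Finset.powersetCard k (Finset.univ : Finset (Fin n)),
          ((∏ i ∈ S, ((q i : ℝ) : ℂ)) * ∏ i ∈ Finset.univ \ S, (1 - ((q i : ℝ) : ℂ))) := by
        push_cast
        ring
end

section
/- Let α > 0 and λ ∈ (0,1) be real numbers and let n be a positive integer. Let (X_{j,λ}(α))_{1≤j≤n} be independent Bernoulli random variables with P{X_{j,λ}(α) = 1} = α/(α + λj), and set Z_{n,λ}(α) = X_{1,λ}(α) + ⋯ + X_{n,λ}(α). Let S_1 : ℕ × ℕ → ℝ satisfy the defining identity of the Stirling numbers of the first kind, namely x(x-1)⋯(x-m+1) = Σ_{l=0}^{m} S_1(m,l) x^l for all real x and all m ≥ 0, and let S_{2,λ} : ℕ × ℕ → ℝ satisfy the defining identity of the degenerate Stirling numbers of the second kind, namely x(x-λ)⋯(x-(m-1)λ) = Σ_{l=0}^{m} S_{2,λ}(m,l) · x(x-1)⋯(x-l+1) for all real x and all m ≥ 0. Then for every integer l with 0 ≤ l ≤ n, (1/(2π)) ∫_{-π}^{π}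 E[e^{iθ(Z_{n,λ}(α) - l)}] dθ = (-1)^{n-l} (α^{l+1}/λ^{n+1}) (Γ(α/λ)/Γ(n + α/λ + 1)) Σ_{m=l}^{n} S_{2,λ}(n+1, m+1) S_1(m+1, l+1), where i = √(-1) and Γ denotes the Gamma function. -/
open MeasureTheory ProbabilityTheory Finset Complex

open Polynomial intervalIntegral

lemma range_succ_eq_insert (n : ℕ) : Finset.range (n+1) = insert 0 (Finset.Icc 1 n) := by
  ext j; simp [Nat.lt_succ_iff]; omega

lemma stirling_sum_eq (l : ℝ) (n k : ℕ) (hk : k ≤ n)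
    (S₁ : ℕ → ℕ → ℝ)
    (hS₁ : ∀ (m : ℕ) (x : ℝ),
      ∏ k ∈ Finset.range m, (x - k) = ∑ i ∈ Finset.range (m + 1), S₁ m i * x ^ i)
    (S₂ : ℕ → ℕ → ℝ)
    (hS₂ : ∀ (m : ℕ) (x : ℝ),
      ∏ k ∈ Finset.range m, (x - k * l)
        = ∑ i ∈ Finset.range (m + 1), S₂ m i * ∏ k ∈ Finset.range i, (x - k)) :
    ∑ m ∈ Finset.Icc k n, S₂ (n + 1) (m + 1) * S₁ (m + 1) (k + 1)
      = (-1) ^ (n - k) * l ^ (n - k) *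
        ∑ t ∈ Finset.powersetCard k (Finset.Icc 1 n),
          ∏ j ∈ Finset.Icc 1 n \ t, (j : ℝ) := by
  classical
  set G : ℝ[X] := ∏ j ∈ Finset.range (n+1), (X - C ((j : ℝ) * l)) with hG
  -- first expression for coeff (k+1) of G, via the Stirling identities
  have hGsum : G = ∑ i ∈ Finset.range (n+2), ∑ j ∈ Finset.range (i+1),
      C (S₂ (n+1) i * S₁ i j) * X ^ j := by
    apply Polynomial.funext
    intro x
    simp only [hG, eval_prod, eval_finset_sum, eval_sub, eval_X, eval_C, eval_mul, eval_pow]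
    rw [hS₂ (n+1) x]
    refine Finset.sum_congr rfl fun i _ => ?_
    rw [hS₁ i x, Finset.mul_sum]
    exact Finset.sum_congr rfl fun j _ => by ring
  have hcoeff1 : G.coeff (k+1) = ∑ m ∈ Finset.Icc k n, S₂ (n + 1) (m + 1) * S₁ (m + 1) (k + 1) := by
    rw [hGsum, Polynomial.finset_sum_coeff]
    have key : ∀ i ∈ Finset.range (n+2),
        (∑ j ∈ Finset.range (i+1), C (S₂ (n+1) i * S₁ i j) * X ^ j).coeff (k+1)
          = if k < i then S₂ (n+1) i * S₁ i (k+1) else 0 := by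
      intro i _
      rw [Polynomial.finset_sum_coeff]
      simp only [Polynomial.coeff_C_mul, Polynomial.coeff_X_pow, mul_ite, mul_one, mul_zero]
      rw [Finset.sum_ite_eq (Finset.range (i+1)) (k+1)]
      simp [Nat.lt_succ_iff]
    rw [Finset.sum_congr rfl key, Finset.sum_ite, Finset.sum_const_zero, add_zero]
    have hfil : Finset.filter (fun i => k < i) (Finset.range (n+2)) = Finset.Icc (k+1) (n+1) := by
      ext i; simp [Nat.lt_succ_iff]; omega
    rw [hfil]
    refine Finset.sum_nbij' (fun i => i - 1) (fun m => m + 1) ?_ ?_ ?_ ?_ ?_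
    · intro i hi; simp at hi ⊢; omega
    · intro m hm; simp at hm ⊢; omega
    · intro i hi; simp at hi; show i - 1 + 1 = i; omega
    · intro m _; rfl
    · intro i hi; simp at hi
      have h1 : i - 1 + 1 = i := by omega
      rw [h1]
  -- second expression for coeff (k+1) of G, via prod_add
  have hG2 : G = ∑ t ∈ (Finset.range (n+1)).powerset,
      X ^ t.card * C (∏ j ∈ Finset.range (n+1) \ t, (-((j:ℝ) * l))) := by
    have h0 : G = ∏ j ∈ Finset.range (n+1), (X + C (-((j:ℝ) * l))) := by
      simp [hG, sub_eq_add_neg]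
    rw [h0, Finset.prod_add]
    refine Finset.sum_congr rfl fun t _ => ?_
    rw [Finset.prod_const, map_prod]
  have hcoeff2 : G.coeff (k+1) = ∑ t ∈ Finset.powersetCard (k+1) (Finset.range (n+1)),
      ∏ j ∈ Finset.range (n+1) \ t, (-((j:ℝ) * l)) := by
    rw [hG2, Polynomial.finset_sum_coeff, Finset.sum_powerset]
    have hcard : (Finset.range (n+1)).card = n + 1 := by simp
    rw [hcard]
    have key : ∀ c ∈ Finset.range (n+2),
        (∑ t ∈ Finset.powersetCard c (Finset.range (n+1)),
          (X ^ t.card * C (∏ j ∈ Finset.range (n+1) \ t, (-((j:ℝ) * l)))).coeff (k+1))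
        = if k+1 = c then
            ∑ t ∈ Finset.powersetCard c (Finset.range (n+1)),
              ∏ j ∈ Finset.range (n+1) \ t, (-((j:ℝ) * l)) else 0 := by
      intro c _
      split_ifs with h
      · subst h
        refine Finset.sum_congr rfl fun t ht => ?_
        rw [Finset.mem_powersetCard] at ht
        rw [Polynomial.coeff_mul_C, Polynomial.coeff_X_pow, ht.2]
        simp
      · rw [Finset.sum_eq_zero]
        intro t ht
        rw [Finset.mem_powersetCard] at ht
        rw [Polynomial.coeff_mul_C, Polynomial.coeff_X_pow, ht.2, if_neg h, zero_mul]
    have hmem : k + 1 ∈ Finset.range (n+2) := by simp; omega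
    rw [Finset.sum_congr rfl key, Finset.sum_ite_eq (Finset.range (n+2)) (k+1), if_pos hmem]
  -- split the powersetCard (k+1) into subsets containing 0 and those not
  have hsplit : ∑ t ∈ Finset.powersetCard (k+1) (Finset.range (n+1)),
      ∏ j ∈ Finset.range (n+1) \ t, (-((j:ℝ) * l))
      = ∑ t ∈ Finset.powersetCard k (Finset.Icc 1 n),
          ∏ j ∈ Finset.range (n+1) \ insert 0 t, (-((j:ℝ) * l)) := by
    have h0 : (0 : ℕ) ∉ Finset.Icc 1 n := by simp
    rw [range_succ_eq_insert n, Finset.powersetCard_succ_insert h0]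
    rw [Finset.sum_union]
    · have hz : ∑ t ∈ Finset.powersetCard (k+1) (Finset.Icc 1 n),
          ∏ j ∈ insert 0 (Finset.Icc 1 n) \ t, (-((j:ℝ) * l)) = 0 := by
        refine Finset.sum_eq_zero fun t ht => ?_
        rw [Finset.mem_powersetCard] at ht
        refine Finset.prod_eq_zero (i := 0) ?_ (by simp)
        rw [Finset.mem_sdiff]
        exact ⟨Finset.mem_insert_self _ _, fun h => h0 (ht.1 h)⟩
      rw [hz, zero_add, Finset.sum_image]
      intro x hx y hy hxy
      rw [Finset.mem_coe, Finset.mem_powersetCard] at hx hy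
      have hx0 : 0 ∉ x := fun h => h0 (hx.1 h)
      have hy0 : 0 ∉ y := fun h => h0 (hy.1 h)
      have := congrArg (Finset.erase · 0) hxy
      simpa [Finset.erase_insert hx0, Finset.erase_insert hy0] using this
    · rw [Finset.disjoint_left]
      intro t ht ht'
      rw [Finset.mem_powersetCard] at ht
      rw [Finset.mem_image] at ht'
      obtain ⟨u, _, rfl⟩ := ht'
      exact h0 (ht.1 (Finset.mem_insert_self 0 u))
  -- evaluate each term
  have hterm : ∀ t ∈ Finset.powersetCard k (Finset.Icc 1 n),
      ∏ j ∈ Finset.range (n+1) \ insert 0 t, (-((j:ℝ) * l))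
        = (-1) ^ (n - k) * l ^ (n - k) * ∏ j ∈ Finset.Icc 1 n \ t, (j : ℝ) := by
    intro t ht
    rw [Finset.mem_powersetCard] at ht
    have hset : Finset.range (n+1) \ insert 0 t = Finset.Icc 1 n \ t := by
      ext j
      simp only [Finset.mem_sdiff, Finset.mem_range, Finset.mem_insert, Finset.mem_Icc,
        Nat.lt_succ_iff, not_or]
      constructor
      · rintro ⟨h1, h2, h3⟩; exact ⟨⟨by omega, h1⟩, h3⟩
      · rintro ⟨⟨h1, h2⟩, h3⟩; exact ⟨h2, by omega, h3⟩
    rw [hset]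
    have hcardt : (Finset.Icc 1 n \ t).card = n - k := by
      rw [Finset.card_sdiff_of_subset ht.1, Nat.card_Icc, ht.2]
      omega
    calc ∏ j ∈ Finset.Icc 1 n \ t, (-((j:ℝ) * l))
        = ∏ j ∈ Finset.Icc 1 n \ t, ((-l) * (j:ℝ)) := by
          refine Finset.prod_congr rfl fun j _ => by ring
      _ = (-l) ^ (n - k) * ∏ j ∈ Finset.Icc 1 n \ t, (j:ℝ) := by
          rw [Finset.prod_mul_distrib, Finset.prod_const, hcardt]
      _ = (-1) ^ (n - k) * l ^ (n - k) * ∏ j ∈ Finset.Icc 1 n \ t, (j:ℝ) := by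
          rw [neg_pow]
  rw [← hcoeff1, hcoeff2, hsplit, Finset.sum_congr rfl hterm, ← Finset.mul_sum]

lemma gamma_prod (x : ℝ) (hx : 0 < x) (m : ℕ) :
    Real.Gamma (x + m) = Real.Gamma x * ∏ j ∈ Finset.range m, (x + j) := by
  induction m with
  | zero => simp
  | succ m ih =>
    have hxm : x + m ≠ 0 := by positivity
    have h : (x : ℝ) + (m + 1 : ℕ) = (x + m) + 1 := by push_cast; ring
    rw [h, Real.Gamma_add_one hxm, ih, Finset.prod_range_succ]
    ring

lemma gamma_ratio (α lv : ℝ) (hα : 0 < α) (hlv : 0 < lv) (n : ℕ) :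
    Real.Gamma (α / lv) / Real.Gamma (n + α / lv + 1)
      = lv ^ (n + 1) / ∏ j ∈ Finset.range (n + 1), (α + lv * j) := by
  have hx : 0 < α / lv := div_pos hα hlv
  have h1 : (n : ℝ) + α / lv + 1 = α / lv + ((n + 1 : ℕ) : ℝ) := by push_cast; ring
  rw [h1, gamma_prod _ hx (n+1)]
  have hΓ : Real.Gamma (α / lv) ≠ 0 := (Real.Gamma_pos_of_pos hx).ne'
  have hP : ∏ j ∈ Finset.range (n+1), (α / lv + j)
      = (∏ j ∈ Finset.range (n+1), (α + lv * j)) / lv ^ (n + 1) := by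
    rw [eq_div_iff (by positivity)]
    have h2 : (∏ j ∈ Finset.range (n+1), (α / lv + j)) * lv ^ (n+1)
        = ∏ j ∈ Finset.range (n+1), ((α / lv + j) * lv) := by
      rw [Finset.prod_mul_distrib, Finset.prod_const, Finset.card_range]
    rw [h2]
    refine Finset.prod_congr rfl fun j _ => ?_
    field_simp
  rw [hP, div_mul_eq_div_div, div_self hΓ, one_div, inv_div]

lemma integral_exp_int (m : ℤ) :
    ∫ θ in (-Real.pi)..Real.pi, Complex.exp (Complex.I * θ * m)
      = if m = 0 then ((2 * Real.pi : ℝ) : ℂ) else 0 := by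
  split_ifs with h
  · subst h
    simp only [Int.cast_zero, mul_zero, Complex.exp_zero]
    rw [intervalIntegral.integral_const, Complex.real_smul]
    push_cast
    ring
  · have hc : (Complex.I * m) ≠ 0 := by
      simp [Complex.I_ne_zero, Complex.ext_iff]
      exact_mod_cast h
    have hrw : ∀ θ : ℝ, Complex.I * θ * m = (Complex.I * m) * θ := fun θ => by ring
    simp_rw [hrw]
    rw [integral_exp_mul_complex hc]
    have h1 : Complex.exp (Complex.I * m * Real.pi) = (-1 : ℂ) ^ m := by
      have e : Complex.I * m * Real.pi = (m : ℤ) * (Real.pi * Complex.I) := by push_cast; ring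
      rw [e, Complex.exp_int_mul, Complex.exp_pi_mul_I]
    have h2 : Complex.exp (Complex.I * m * (-Real.pi : ℝ)) = ((-1 : ℂ) ^ m)⁻¹ := by
      have e : Complex.I * m * ((-Real.pi : ℝ) : ℂ) = ((-m : ℤ) : ℂ) * (Real.pi * Complex.I) := by
        push_cast; ring
      rw [e, Complex.exp_int_mul, Complex.exp_pi_mul_I, zpow_neg]
    rw [h1, h2]
    have hsq : (-1 : ℂ) ^ m * (-1 : ℂ) ^ m = 1 := by
      rw [← zpow_add₀ (by norm_num : (-1 : ℂ) ≠ 0)]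
      have e : m + m = 2 * m := by ring
      rw [e, zpow_mul]
      norm_num
    rw [inv_eq_of_mul_eq_one_left hsq, sub_self, zero_div]
lemma fourier_prob {Ω : Type*} [MeasurableSpace Ω] (μ : Measure Ω) [IsProbabilityMeasure μ]
    (Z : Ω → ℕ) (hZ : Measurable Z) (k : ℕ) :
    (1 / (2 * Real.pi) : ℂ)
        * ∫ θ in (-Real.pi)..Real.pi, ∫ ω, Complex.exp (Complex.I * θ * ((Z ω : ℂ) - k)) ∂μ
      = (((μ {ω | Z ω = k}).toReal : ℝ) : ℂ) := by
  have hπ : (0:ℝ) < Real.pi := Real.pi_pos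
  have hle : -Real.pi ≤ Real.pi := by linarith
  -- rewrite exponent using integer cast
  have hcast : ∀ ω, ((Z ω : ℂ) - k) = (((Z ω : ℤ) - k : ℤ) : ℂ) := fun ω => by push_cast; ring
  -- finite restricted measure
  have hfin : IsFiniteMeasure (volume.restrict (Set.Ioc (-Real.pi) Real.pi)) := by
    constructor
    rw [Measure.restrict_apply_univ]
    exact measure_Ioc_lt_top
  -- integrability on the product
  have hmeas : Measurable (fun p : ℝ × Ω =>
      Complex.exp (Complex.I * p.1 * (((Z p.2 : ℤ) - k : ℤ) : ℂ))) := by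
    apply Complex.measurable_exp.comp
    apply Measurable.mul
    · exact (measurable_const.mul (Complex.measurable_ofReal.comp measurable_fst))
    · exact (measurable_from_top (f := fun m : ℕ => (((m : ℤ) - k : ℤ) : ℂ))).comp
        (hZ.comp measurable_snd)
  have hint : Integrable (fun p : ℝ × Ω =>
      Complex.exp (Complex.I * p.1 * (((Z p.2 : ℤ) - k : ℤ) : ℂ)))
      ((volume.restrict (Set.Ioc (-Real.pi) Real.pi)).prod μ) := by
    refine Integrable.mono' (integrable_const 1) hmeas.aestronglyMeasurable ?_
    refine Filter.Eventually.of_forall fun p => ?_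
    rw [Complex.norm_exp]
    have : (Complex.I * p.1 * (((Z p.2 : ℤ) - k : ℤ) : ℂ)).re = 0 := by
      simp [Complex.mul_re]
    rw [this, Real.exp_zero]
  -- rewrite as product integral and swap
  calc (1 / (2 * Real.pi) : ℂ)
        * ∫ θ in (-Real.pi)..Real.pi, ∫ ω, Complex.exp (Complex.I * θ * ((Z ω : ℂ) - k)) ∂μ
      = (1 / (2 * Real.pi) : ℂ) * ∫ ω, (∫ θ in (-Real.pi)..Real.pi,
            Complex.exp (Complex.I * θ * (((Z ω : ℤ) - k : ℤ) : ℂ))) ∂μ := by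
        congr 1
        simp_rw [hcast]
        rw [intervalIntegral.integral_of_le hle]
        rw [integral_integral_swap hint]
        refine integral_congr_ae (Filter.Eventually.of_forall fun ω => ?_)
        exact (intervalIntegral.integral_of_le hle).symm
    _ = (1 / (2 * Real.pi) : ℂ) * ∫ ω, Set.indicator {ω | Z ω = k}
            (fun _ => ((2 * Real.pi : ℝ) : ℂ)) ω ∂μ := by
        congr 1
        refine integral_congr_ae (Filter.Eventually.of_forall fun ω => ?_)
        show (∫ θ in (-Real.pi)..Real.pi,
            Complex.exp (Complex.I * θ * (((Z ω : ℤ) - k : ℤ) : ℂ))) = _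
        rw [integral_exp_int ((Z ω : ℤ) - k)]
        by_cases h : Z ω = k
        · rw [if_pos (by omega), Set.indicator_of_mem (by exact h)]
        · rw [if_neg (by omega), Set.indicator_of_notMem (by exact h)]
    _ = (((μ {ω | Z ω = k}).toReal : ℝ) : ℂ) := by
        rw [integral_indicator_const ((2 * Real.pi : ℝ) : ℂ)
          (show MeasurableSet {ω | Z ω = k} from hZ (MeasurableSet.singleton k))]
        rw [Complex.real_smul]
        have h2π : ((2 * Real.pi : ℝ) : ℂ) ≠ 0 := by
          simp only [ne_eq, Complex.ofReal_eq_zero]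
          positivity
        rw [Complex.ofReal_mul] at h2π ⊢
        have hπ' : (Real.pi : ℂ) ≠ 0 := Complex.ofReal_ne_zero.mpr hπ.ne'
        field_simp
        simp [measureReal_def, mul_comm]

lemma prob_bernoulli_sum {Ω : Type*} [MeasurableSpace Ω] (μ : Measure Ω) [IsProbabilityMeasure μ]
    (n : ℕ) (X' : ℕ → Ω → ℕ)
    (hX'meas : ∀ j, Measurable (X' j))
    (hX'indep : iIndepFun (fun i : Fin n => X' (i.1 + 1)) μ)
    (hX'val : ∀ j ∈ Finset.Icc 1 n, ∀ ω, X' j ω = 0 ∨ X' j ω = 1)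
    (p : ℕ → ℝ) (hp : ∀ j ∈ Finset.Icc 1 n, 0 ≤ p j ∧ p j ≤ 1)
    (hX'p1 : ∀ j ∈ Finset.Icc 1 n, μ {ω | X' j ω = 1} = ENNReal.ofReal (p j))
    (hX'p0 : ∀ j ∈ Finset.Icc 1 n, μ {ω | X' j ω = 0} = ENNReal.ofReal (1 - p j))
    (k : ℕ) :
    μ {ω | ∑ j ∈ Finset.Icc 1 n, X' j ω = k}
      = ENNReal.ofReal (∑ t ∈ Finset.powersetCard k (Finset.Icc 1 n),
          (∏ j ∈ t, p j) * ∏ j ∈ Finset.Icc 1 n \ t, (1 - p j)) := by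
  classical
  set s := Finset.Icc 1 n with hs
  -- the elementary events
  set A : Finset ℕ → Set Ω :=
    fun t => ⋂ j ∈ s, (X' j) ⁻¹' {if j ∈ t then 1 else 0} with hA
  have hAmeas : ∀ t, MeasurableSet (A t) := by
    intro t
    exact MeasurableSet.biInter (Finset.countable_toSet s)
      (fun j _ => hX'meas j (measurableSet_singleton _))
  -- measure of each elementary event
  have hAmu : ∀ t ∈ Finset.powersetCard k s,
      μ (A t) = ∏ j ∈ s, (if j ∈ t then ENNReal.ofReal (p j) else ENNReal.ofReal (1 - p j)) := by
    intro t ht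
    have hfin : A t = ⋂ i : Fin n, (X' (i.1 + 1)) ⁻¹' {if i.1 + 1 ∈ t then 1 else 0} := by
      ext ω
      simp only [hA, Set.mem_iInter, Set.mem_preimage, Set.mem_singleton_iff, hs,
        Finset.mem_Icc]
      constructor
      · intro h i
        exact h (i.1 + 1) ⟨by omega, by omega⟩
      · intro h j hj
        have : j - 1 < n := by omega
        have := h ⟨j - 1, this⟩
        simpa [Nat.sub_add_cancel hj.1] using this
    rw [hfin, hX'indep.meas_iInter (fun i => ⟨{if i.1 + 1 ∈ t then 1 else 0}, trivial, rfl⟩)]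
    rw [Fin.prod_univ_eq_prod_range (fun i => μ ((X' (i + 1)) ⁻¹' {if i + 1 ∈ t then 1 else 0})) n]
    refine Finset.prod_nbij' (fun i => i + 1) (fun j => j - 1) ?_ ?_ ?_ ?_ ?_
    · intro i hi; simp [hs] at hi ⊢; omega
    · intro j hj; simp [hs] at hj ⊢; omega
    · intro i _; show i + 1 - 1 = i; omega
    · intro j hj; simp [hs] at hj; show j - 1 + 1 = j; omega
    · intro i hi
      split_ifs with h
      · rw [show (X' (i+1)) ⁻¹' {1} = {ω | X' (i+1) ω = 1} from rfl,
          hX'p1 (i+1) (by simp [hs] at hi ⊢; omega)]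
      · rw [show (X' (i+1)) ⁻¹' {0} = {ω | X' (i+1) ω = 0} from rfl,
          hX'p0 (i+1) (by simp [hs] at hi ⊢; omega)]
  -- decomposition of the event
  have hdecomp : {ω | ∑ j ∈ s, X' j ω = k} = ⋃ t ∈ Finset.powersetCard k s, A t := by
    ext ω
    simp only [Set.mem_setOf_eq, Set.mem_iUnion, hA, Set.mem_iInter, Set.mem_preimage,
      Set.mem_singleton_iff]
    constructor
    · intro hsum
      refine ⟨s.filter (fun j => X' j ω = 1), ?_, ?_⟩
      · rw [Finset.mem_powersetCard]
        refine ⟨Finset.filter_subset _ _, ?_⟩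
        have : ∑ j ∈ s, X' j ω = (s.filter (fun j => X' j ω = 1)).card := by
          rw [Finset.card_filter]
          refine Finset.sum_congr rfl fun j hj => ?_
          rcases hX'val j hj ω with h0 | h1
          · simp [h0]
          · simp [h1]
        omega
      · intro j hj
        split_ifs with h
        · have := Finset.mem_filter.mp h
          exact this.2
        · rcases hX'val j hj ω with h0 | h1
          · exact h0
          · exact absurd (by rw [Finset.mem_filter]; exact ⟨hj, h1⟩) h
    · rintro ⟨t, ht, hω⟩
      rw [Finset.mem_powersetCard] at ht
      calc ∑ j ∈ s, X' j ω = ∑ j ∈ s, if j ∈ t then 1 else 0 :=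
            Finset.sum_congr rfl fun j hj => hω j hj
        _ = ∑ j ∈ s ∩ t, 1 := by rw [Finset.sum_ite_mem]
        _ = t.card := by rw [Finset.inter_eq_right.mpr ht.1, Finset.sum_const, smul_eq_mul, mul_one]
        _ = k := ht.2
  -- disjointness
  have hdisj : Set.PairwiseDisjoint (↑(Finset.powersetCard k s)) A := by
    intro t ht t' ht' htt'
    rw [Finset.mem_coe, Finset.mem_powersetCard] at ht ht'
    rw [Function.onFun, Set.disjoint_left]
    intro ω hωt hωt'
    simp only [hA, Set.mem_iInter, Set.mem_preimage, Set.mem_singleton_iff] at hωt hωt'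
    apply htt'
    ext j
    constructor
    · intro hjt
      have hjs : j ∈ s := ht.1 hjt
      by_contra hjt'
      have h1 := hωt j hjs
      have h2 := hωt' j hjs
      rw [if_pos hjt] at h1
      rw [if_neg hjt'] at h2
      omega
    · intro hjt'
      have hjs : j ∈ s := ht'.1 hjt'
      by_contra hjt
      have h1 := hωt j hjs
      have h2 := hωt' j hjs
      rw [if_neg hjt] at h1
      rw [if_pos hjt'] at h2
      omega
  rw [hdecomp, measure_biUnion_finset hdisj (fun t _ => hAmeas t)]
  rw [Finset.sum_congr rfl hAmu]
  -- convert products to ofReal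
  have hterm : ∀ t ∈ Finset.powersetCard k s,
      (∏ j ∈ s, (if j ∈ t then ENNReal.ofReal (p j) else ENNReal.ofReal (1 - p j)))
        = ENNReal.ofReal ((∏ j ∈ t, p j) * ∏ j ∈ s \ t, (1 - p j)) := by
    intro t ht
    rw [Finset.mem_powersetCard] at ht
    rw [← Finset.prod_sdiff ht.1]
    have e1 : ∏ j ∈ s \ t, (if j ∈ t then ENNReal.ofReal (p j) else ENNReal.ofReal (1 - p j))
        = ∏ j ∈ s \ t, ENNReal.ofReal (1 - p j) := by
      refine Finset.prod_congr rfl fun j hj => ?_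
      rw [if_neg (Finset.mem_sdiff.mp hj).2]
    have e2 : ∏ j ∈ t, (if j ∈ t then ENNReal.ofReal (p j) else ENNReal.ofReal (1 - p j))
        = ∏ j ∈ t, ENNReal.ofReal (p j) := by
      refine Finset.prod_congr rfl fun j hj => ?_
      rw [if_pos hj]
    rw [e1, e2, ← ENNReal.ofReal_prod_of_nonneg (fun j hj => (hp j ((Finset.mem_sdiff.mp hj).1)).2 |> sub_nonneg.mpr),
      ← ENNReal.ofReal_prod_of_nonneg (fun j hj => (hp j (ht.1 hj)).1),
      ← ENNReal.ofReal_mul (Finset.prod_nonneg (fun j hj => sub_nonneg.mpr (hp j ((Finset.mem_sdiff.mp hj).1)).2))]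
    rw [mul_comm]
  rw [Finset.sum_congr rfl hterm]
  rw [← ENNReal.ofReal_sum_of_nonneg]
  intro t ht
  rw [Finset.mem_powersetCard] at ht
  exact mul_nonneg (Finset.prod_nonneg fun j hj => (hp j (ht.1 hj)).1)
    (Finset.prod_nonneg fun j hj => sub_nonneg.mpr (hp j ((Finset.mem_sdiff.mp hj).1)).2)
/-- Theorem 4: With `Z = X' 1 + ⋯ + X' n` a sum of independent Bernoulli
random variables with success probabilities `α/(α + λj)`, and `S₁`, `S₂ₗ` satisfying the
defining identities of the (degenerate) Stirling numbers, for every `0 ≤ l ≤ n`,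
`(1/(2π)) ∫_{-π}^{π} E[e^{iθ(Z - l)}] dθ
  = (-1)^{n-l} (α^{l+1}/λ^{n+1}) (Γ(α/λ)/Γ(n + α/λ + 1))
      ∑_{m=l}^{n} S₂ₗ(n+1, m+1) S₁(m+1, l+1)`. -/
theorem integral_char_eq_sum_stirling
    {Ω : Type*} [MeasurableSpace Ω] (μ : Measure Ω) [IsProbabilityMeasure μ]
    (α l : ℝ) (hα : 0 < α) (hl : l ∈ Set.Ioo (0 : ℝ) 1)
    (n : ℕ) (hn : 0 < n)
    (X' : ℕ → Ω → ℕ)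
    (hX'meas : ∀ j, Measurable (X' j))
    (hX'indep : iIndepFun (fun i : Fin n => X' (i.1 + 1)) μ)
    (hX'val : ∀ j ∈ Finset.Icc 1 n, ∀ ω, X' j ω = 0 ∨ X' j ω = 1)
    (hX'p1 : ∀ j ∈ Finset.Icc 1 n,
      μ {ω | X' j ω = 1} = ENNReal.ofReal (α / (α + l * j)))
    (hX'p0 : ∀ j ∈ Finset.Icc 1 n,
      μ {ω | X' j ω = 0} = ENNReal.ofReal (1 - α / (α + l * j)))
    (S₁ : ℕ → ℕ → ℝ)
    (hS₁ : ∀ (m : ℕ) (x : ℝ),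
      ∏ k ∈ Finset.range m, (x - k) = ∑ i ∈ Finset.range (m + 1), S₁ m i * x ^ i)
    (S₂ : ℕ → ℕ → ℝ)
    (hS₂ : ∀ (m : ℕ) (x : ℝ),
      ∏ k ∈ Finset.range m, (x - k * l)
        = ∑ i ∈ Finset.range (m + 1), S₂ m i * ∏ k ∈ Finset.range i, (x - k)) :
    ∀ k : ℕ, k ≤ n →
      (1 / (2 * Real.pi) : ℂ)
          * ∫ θ in (-Real.pi)..Real.pi,
              ∫ ω, Complex.exp
                (Complex.I * θ * (((∑ j ∈ Finset.Icc 1 n, X' j ω : ℕ) : ℂ) - k)) ∂μ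
        = ((((-1) ^ (n - k) * (α ^ (k + 1) / l ^ (n + 1))
              * (Real.Gamma (α / l) / Real.Gamma (n + α / l + 1))
              * ∑ m ∈ Finset.Icc k n, S₂ (n + 1) (m + 1) * S₁ (m + 1) (k + 1) : ℝ)) : ℂ) := by
  intro k hk
  have hl0 : 0 < l := hl.1
  -- positivity of denominators
  have hden : ∀ j : ℕ, 0 < α + l * j := fun j => by positivity
  set s := Finset.Icc 1 n with hs
  set p : ℕ → ℝ := fun j => α / (α + l * j) with hp
  have hp01 : ∀ j ∈ s, 0 ≤ p j ∧ p j ≤ 1 := by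
    intro j _
    constructor
    · positivity
    · rw [hp, div_le_one (hden j)]
      have : (0:ℝ) ≤ l * j := by positivity
      linarith
  -- Step 1 : Fourier / Fubini reduces LHS to a point probability
  have hmZ : Measurable (fun ω => ∑ j ∈ s, X' j ω) :=
    Finset.measurable_sum s (fun j _ => hX'meas j)
  have h1 : (1 / (2 * Real.pi) : ℂ)
          * ∫ θ in (-Real.pi)..Real.pi,
              ∫ ω, Complex.exp
                (Complex.I * θ * (((∑ j ∈ Finset.Icc 1 n, X' j ω : ℕ) : ℂ) - k)) ∂μ
      = (((μ {ω | (fun ω => ∑ j ∈ s, X' j ω) ω = k}).toReal : ℝ) : ℂ) :=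
    fourier_prob μ (fun ω => ∑ j ∈ s, X' j ω) hmZ k
  rw [h1]
  -- Step 2 : the point probability
  have h2 := prob_bernoulli_sum μ n X' hX'meas hX'indep hX'val p hp01 hX'p1 hX'p0 k
  -- main real computation
  set D : ℝ := ∏ j ∈ s, (α + l * j) with hD
  have hDpos : 0 < D := Finset.prod_pos fun j _ => hden j
  set F : ℝ := ∑ t ∈ Finset.powersetCard k s, ∏ j ∈ s \ t, (j : ℝ) with hF
  -- each probability term
  have hterm : ∀ t ∈ Finset.powersetCard k s,
      (∏ j ∈ t, p j) * ∏ j ∈ s \ t, (1 - p j)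
        = (α ^ k * l ^ (n - k) / D) * ∏ j ∈ s \ t, (j : ℝ) := by
    intro t ht
    rw [Finset.mem_powersetCard] at ht
    have hcards : s.card = n := by rw [hs, Nat.card_Icc]; omega
    have hcardc : (s \ t).card = n - k := by
      rw [Finset.card_sdiff_of_subset ht.1, hcards, ht.2]
    have e1 : ∏ j ∈ t, p j = α ^ k / ∏ j ∈ t, (α + l * j) := by
      rw [hp, Finset.prod_div_distrib, Finset.prod_const, ht.2]
    have e2 : ∏ j ∈ s \ t, (1 - p j)
        = (l ^ (n - k) * ∏ j ∈ s \ t, (j:ℝ)) / ∏ j ∈ s \ t, (α + l * j) := by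
      have : ∀ j ∈ s \ t, (1 - p j) = (l * j) / (α + l * j) := by
        intro j _
        rw [hp, eq_div_iff (hden j).ne']
        field_simp
        ring
      rw [Finset.prod_congr rfl this, Finset.prod_div_distrib, Finset.prod_mul_distrib,
        Finset.prod_const, hcardc]
    rw [e1, e2, div_mul_div_comm]
    have e3 : (∏ j ∈ t, (α + l * j)) * ∏ j ∈ s \ t, (α + l * j) = D := by
      rw [mul_comm, Finset.prod_sdiff ht.1]
    rw [e3]
    ring
  have hPsum : (∑ t ∈ Finset.powersetCard k s, (∏ j ∈ t, p j) * ∏ j ∈ s \ t, (1 - p j))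
      = α ^ k * l ^ (n - k) / D * F := by
    rw [Finset.sum_congr rfl hterm, hF, ← Finset.mul_sum]
  have hPnonneg : (0:ℝ) ≤ ∑ t ∈ Finset.powersetCard k s,
      (∏ j ∈ t, p j) * ∏ j ∈ s \ t, (1 - p j) := by
    refine Finset.sum_nonneg fun t ht => ?_
    rw [Finset.mem_powersetCard] at ht
    exact mul_nonneg (Finset.prod_nonneg fun j hj => (hp01 j (ht.1 hj)).1)
      (Finset.prod_nonneg fun j hj => sub_nonneg.mpr (hp01 j ((Finset.mem_sdiff.mp hj).1)).2)
  have h3 : (μ {ω | (fun ω => ∑ j ∈ s, X' j ω) ω = k}).toReal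
      = α ^ k * l ^ (n - k) / D * F := by
    rw [show {ω | (fun ω => ∑ j ∈ s, X' j ω) ω = k} = {ω | ∑ j ∈ s, X' j ω = k} from rfl]
    rw [h2, ENNReal.toReal_ofReal hPnonneg, hPsum]
  rw [h3]
  -- Step 3 : the right-hand side
  have hΓ := gamma_ratio α l hα hl0 n
  have hprod0 : ∏ j ∈ Finset.range (n + 1), (α + l * j) = α * D := by
    rw [range_succ_eq_insert n, Finset.prod_insert (by simp)]
    norm_num
    exact Or.inl rfl
  have hSt := stirling_sum_eq l n k hk S₁ hS₁ S₂ hS₂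
  have hsign : ((-1:ℝ)) ^ (n - k) * ((-1:ℝ)) ^ (n - k) = 1 := by
    rw [← pow_add, show (n-k) + (n-k) = 2 * (n-k) by ring, pow_mul]
    norm_num
  have hreal : α ^ k * l ^ (n - k) / D * F
      = (-1) ^ (n - k) * (α ^ (k + 1) / l ^ (n + 1))
              * (Real.Gamma (α / l) / Real.Gamma (n + α / l + 1))
              * ∑ m ∈ Finset.Icc k n, S₂ (n + 1) (m + 1) * S₁ (m + 1) (k + 1) := by
    rw [hΓ, hprod0, hSt, ← hF]
    have hln : (0:ℝ) < l ^ (n+1) := by positivity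
    field_simp
    ring_nf
    rw [show ((-1:ℝ)) ^ ((n - k) * 2) = 1 by rw [pow_mul']; norm_num]
    ring
  rw [hreal]
end
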